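/- arXiv:0911.4433 — 4 statements merged into one kernel-verified Lean document; each statement's English description precedes it below -/
import Mathlib

section
/- Let p > 3 be a prime. Then ∑_{1 ≤ i ≤ j ≤ k ≤ p-1} (−1)^i/(i·j·k) ≡ ∑_{1 ≤ i < j < k ≤ p-1} (−1)^i/(i·j·k) (mod p). -/
open Finset
variable {p : ℕ}

private lemma zm_sum_univ [NeZero p] (f : ZMod p → ZMod p) :
    ∑ x : ZMod p, f x = ∑ i ∈ range p, f (i : ZMod p) := by
  refine Finset.sum_nbij' (fun x => x.val) (fun i => (i : ZMod p)) ?_ ?_ ?_ ?_ ?_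
  · intro x _; exact Finset.mem_range.mpr (ZMod.val_lt x)
  · intro i _; exact Finset.mem_univ _
  · intro x _; exact ZMod.natCast_rightInverse x
  · intro i hi; exact ZMod.val_cast_of_lt (Finset.mem_range.mp hi)
  · intro x _; rw [ZMod.natCast_rightInverse x]

private lemma zm_sum_Icc [NeZero p] (f : ZMod p → ZMod p) (hf : f 0 = 0) :
    ∑ i ∈ Icc 1 (p - 1), f (i : ZMod p) = ∑ x : ZMod p, f x := by
  have hp0 : 0 < p := Nat.pos_of_ne_zero (NeZero.ne p)
  rw [zm_sum_univ f, range_eq_Ico, Finset.sum_eq_sum_Ico_succ_bot hp0]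
  have h2 : Icc 1 (p - 1) = Ico 1 p := by
    ext x; simp [Nat.lt_iff_le_pred hp0]
  rw [h2, Nat.cast_zero, hf, zero_add]

private lemma zm_sum_pow [NeZero p] (hp : p.Prime) (m : ℕ) (hm : 0 < m) (hmp : m < p - 1) :
    ∑ x : ZMod p, x ^ m = 0 := by
  haveI : Fact p.Prime := ⟨hp⟩
  have := FiniteField.sum_pow_lt_card_sub_one (K := ZMod p) m (by rwa [ZMod.card])
  exact this

private lemma zm_inv_pow_sum [NeZero p] (hp : p.Prime) (m : ℕ) (hm : 0 < m) (hmp : m < p - 1) :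
    ∑ i ∈ Icc 1 (p - 1), ((i : ZMod p))⁻¹ ^ m = 0 := by
  haveI : Fact p.Prime := ⟨hp⟩
  rw [zm_sum_Icc (fun x => x⁻¹ ^ m) (by simp [zero_pow hm.ne'])]
  rw [← zm_sum_pow hp m hm hmp]
  exact Finset.sum_equiv (Function.Involutive.toPerm _ (fun x : ZMod p => inv_inv x))
    (by simp) (by intro i _; simp [Function.Involutive.toPerm])

private lemma zm_ne (hp : p.Prime) {i : ℕ} (h1 : 1 ≤ i) (h2 : i ≤ p - 1) :
    (i : ZMod p) ≠ 0 := by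
  rw [Ne, ZMod.natCast_eq_zero_iff]
  intro hd
  have := Nat.le_of_dvd h1 hd
  have := hp.pos
  omega

private lemma zm_cast_sub (hp0 : 0 < p) {i : ℕ} (h : i ≤ p) :
    ((p - i : ℕ) : ZMod p) = -(i : ZMod p) := by
  rw [Nat.cast_sub h, ZMod.natCast_self, zero_sub]

private lemma zm_sign (hodd : Odd p) {i : ℕ} (h : i ≤ p) :
    (-1 : ZMod p) ^ (p - i) = -(-1 : ZMod p) ^ i := by
  rcases Nat.even_or_odd i with he | ho
  · have h2 : Odd (p - i) := (Nat.odd_sub h).mpr (by simp [hodd, he])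
    rw [h2.neg_one_pow, he.neg_one_pow]
  · have h2 : Even (p - i) := Nat.Odd.sub_odd hodd ho
    rw [h2.neg_one_pow, ho.neg_one_pow, neg_neg]

private lemma pair_le (n : ℕ) (f : ℕ → ℕ → ZMod p) :
    ∑ x ∈ ((Icc 1 n ×ˢ Icc 1 n).filter fun x => x.1 ≤ x.2), f x.1 x.2
      = ∑ k ∈ Icc 1 n, ∑ j ∈ Icc 1 k, f j k := by
  rw [Finset.sum_filter, Finset.sum_product_right]
  refine Finset.sum_congr rfl fun k hk => ?_
  rw [← Finset.sum_filter]
  refine Finset.sum_congr ?_ (fun _ _ => rfl)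
  simp only [Finset.mem_Icc] at hk
  ext j
  simp only [Finset.mem_filter, Finset.mem_Icc]
  omega

private lemma pair_lt (n : ℕ) (f : ℕ → ℕ → ZMod p) :
    ∑ x ∈ ((Icc 1 n ×ˢ Icc 1 n).filter fun x => x.1 < x.2), f x.1 x.2
      = ∑ k ∈ Icc 1 n, ∑ j ∈ Ico 1 k, f j k := by
  rw [Finset.sum_filter, Finset.sum_product_right]
  refine Finset.sum_congr rfl fun k hk => ?_
  rw [← Finset.sum_filter]
  refine Finset.sum_congr ?_ (fun _ _ => rfl)
  simp only [Finset.mem_Icc] at hk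
  ext j
  simp only [Finset.mem_filter, Finset.mem_Icc, Finset.mem_Ico]
  omega

private lemma pair_diag (n : ℕ) (f : ℕ → ℕ → ZMod p) :
    ∑ x ∈ ((Icc 1 n ×ˢ Icc 1 n).filter fun x => x.1 = x.2), f x.1 x.2
      = ∑ i ∈ Icc 1 n, f i i := by
  refine Finset.sum_nbij' (fun x => x.1) (fun i => (i, i)) ?_ ?_ ?_ ?_ ?_
  · intro x hx
    simp only [Finset.mem_filter, Finset.mem_product] at hx
    exact hx.1.1
  · intro i hi
    simp only [Finset.mem_filter, Finset.mem_product]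
    exact ⟨⟨hi, hi⟩, trivial⟩
  · intro x hx
    simp only [Finset.mem_filter] at hx
    exact Prod.ext rfl hx.2
  · intro i _; rfl
  · intro x hx
    simp only [Finset.mem_filter] at hx
    rw [← hx.2]

private lemma zm_main (hp : p.Prime) (hp3 : 3 < p) :
    (∑ k ∈ Icc 1 (p - 1), ∑ j ∈ Icc 1 k, ∑ i ∈ Icc 1 j,
        (-1 : ZMod p) ^ i * ((i : ZMod p) * (j : ZMod p) * (k : ZMod p))⁻¹)
      = ∑ k ∈ Icc 1 (p - 1), ∑ j ∈ Ico 1 k, ∑ i ∈ Ico 1 j,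
        (-1 : ZMod p) ^ i * ((i : ZMod p) * (j : ZMod p) * (k : ZMod p))⁻¹ := by
  haveI : Fact p.Prime := ⟨hp⟩
  haveI : NeZero p := ⟨hp.pos.ne'⟩
  have hodd : Odd p := hp.odd_of_ne_two (by omega)
  set n := p - 1 with hn
  let t : ℕ → ℕ → ℕ → ZMod p := fun i j k =>
    (-1 : ZMod p) ^ i * ((i : ZMod p) * (j : ZMod p) * (k : ZMod p))⁻¹
  show (∑ k ∈ Icc 1 n, ∑ j ∈ Icc 1 k, ∑ i ∈ Icc 1 j, t i j k)
      = ∑ k ∈ Icc 1 n, ∑ j ∈ Ico 1 k, ∑ i ∈ Ico 1 j, t i j k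
  set S : Finset (ℕ × ℕ) := Icc 1 n ×ˢ Icc 1 n with hS
  -- harmonic sums
  have H1 : ∑ k ∈ Icc 1 n, ((k : ZMod p))⁻¹ = 0 := by
    simpa using zm_inv_pow_sum hp 1 one_pos (by omega)
  have H2 : ∑ k ∈ Icc 1 n, ((k : ZMod p))⁻¹ ^ 2 = 0 :=
    zm_inv_pow_sum hp 2 two_pos (by omega)
  -- separable full sums
  have full1 : ∑ x ∈ S, t x.1 x.1 x.2 = 0 := by
    rw [hS, Finset.sum_product]
    refine Finset.sum_eq_zero fun a ha => ?_
    have hrw : ∀ b ∈ Icc 1 n, t a a b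
        = ((-1 : ZMod p) ^ a * ((a : ZMod p) * (a : ZMod p))⁻¹) * ((b : ZMod p))⁻¹ := by
      intro b _
      show (-1 : ZMod p) ^ a * ((a : ZMod p) * (a : ZMod p) * (b : ZMod p))⁻¹ = _
      rw [mul_inv]; ring
    rw [Finset.sum_congr rfl hrw, ← Finset.mul_sum, H1, mul_zero]
  have full2 : ∑ x ∈ S, t x.1 x.2 x.2 = 0 := by
    rw [hS, Finset.sum_product]
    refine Finset.sum_eq_zero fun a ha => ?_
    have hrw : ∀ b ∈ Icc 1 n, t a b b
        = ((-1 : ZMod p) ^ a * ((a : ZMod p))⁻¹) * ((b : ZMod p))⁻¹ ^ 2 := by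
      intro b _
      show (-1 : ZMod p) ^ a * ((a : ZMod p) * (b : ZMod p) * (b : ZMod p))⁻¹ = _
      rw [mul_inv, mul_inv]; ring
    rw [Finset.sum_congr rfl hrw, ← Finset.mul_sum, H2, mul_zero]
  -- split of full sums into ≤ and > parts
  have hsplitfull : ∀ F : ℕ × ℕ → ZMod p,
      ∑ x ∈ S.filter (fun x => x.1 ≤ x.2), F x
        + ∑ x ∈ S.filter (fun x => x.2 < x.1), F x = ∑ x ∈ S, F x := by
    intro F
    rw [← Finset.sum_filter_add_sum_filter_not S (fun x => x.1 ≤ x.2) F]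
    congr 1
    apply Finset.sum_congr _ fun _ _ => rfl
    apply Finset.filter_congr
    intro x _
    simp [Nat.not_le]
  -- swap bijection
  have hswap : ∀ F : ℕ × ℕ → ZMod p,
      ∑ x ∈ S.filter (fun x => x.2 < x.1), F x
        = ∑ x ∈ S.filter (fun x => x.1 < x.2), F x.swap := by
    intro F
    refine Finset.sum_nbij' Prod.swap Prod.swap ?_ ?_ ?_ ?_ ?_
    · intro x hx
      simp only [hS, Finset.mem_filter, Finset.mem_product] at hx ⊢
      exact ⟨⟨hx.1.2, hx.1.1⟩, hx.2⟩
    · intro x hx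
      simp only [hS, Finset.mem_filter, Finset.mem_product] at hx ⊢
      exact ⟨⟨hx.1.2, hx.1.1⟩, hx.2⟩
    · intro x _; exact Prod.swap_swap x
    · intro x _; exact Prod.swap_swap x
    · intro x _; rw [Prod.swap_swap]
  -- ≤ part equals < part plus diagonal
  have hltle : ∀ F : ℕ × ℕ → ZMod p,
      ∑ x ∈ S.filter (fun x => x.1 ≤ x.2), F x
        = ∑ x ∈ S.filter (fun x => x.1 < x.2), F x
          + ∑ x ∈ S.filter (fun x => x.1 = x.2), F x := by
    intro F
    rw [← Finset.sum_filter_add_sum_filter_not (S.filter (fun x => x.1 ≤ x.2))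
      (fun x => x.1 = x.2) F, Finset.filter_filter, Finset.filter_filter, add_comm]
    congr 1
    · apply Finset.sum_congr _ fun _ _ => rfl
      ext x
      simp only [hS, Finset.mem_filter, Finset.mem_product, Finset.mem_Icc]
      omega
    · apply Finset.sum_congr _ fun _ _ => rfl
      ext x
      simp only [hS, Finset.mem_filter, Finset.mem_product, Finset.mem_Icc]
      omega
  -- reflection bijection on the ≤ region
  have hrefl : ∀ F G : ℕ × ℕ → ZMod p,
      (∀ x ∈ S.filter (fun x => x.1 ≤ x.2), F x = G (p - x.2, p - x.1)) →
      ∑ x ∈ S.filter (fun x => x.1 ≤ x.2), F x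
        = ∑ x ∈ S.filter (fun x => x.1 ≤ x.2), G x := by
    intro F G h
    refine Finset.sum_nbij' (fun x => (p - x.2, p - x.1))
      (fun x => (p - x.2, p - x.1)) ?_ ?_ ?_ ?_ h
    · intro x hx
      simp only [hS, Finset.mem_filter, Finset.mem_product, Finset.mem_Icc] at hx ⊢
      omega
    · intro x hx
      simp only [hS, Finset.mem_filter, Finset.mem_product, Finset.mem_Icc] at hx ⊢
      omega
    · intro x hx
      simp only [hS, Finset.mem_filter, Finset.mem_product, Finset.mem_Icc] at hx
      obtain ⟨a, b⟩ := x
      simp only [Prod.mk.injEq]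
      constructor <;> (simp only at hx; omega)
    · intro x hx
      simp only [hS, Finset.mem_filter, Finset.mem_product, Finset.mem_Icc] at hx
      obtain ⟨a, b⟩ := x
      simp only [Prod.mk.injEq]
      constructor <;> (simp only at hx; omega)
  -- pointwise identities for the reflection
  have hterm1 : ∀ x ∈ S.filter (fun x => x.1 ≤ x.2),
      (fun x : ℕ × ℕ => t x.1 x.1 x.2) x
        = (fun y : ℕ × ℕ => t y.2 y.2 y.1) (p - x.2, p - x.1) := by
    intro x hx
    simp only [hS, Finset.mem_filter, Finset.mem_product, Finset.mem_Icc] at hx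
    show (-1 : ZMod p) ^ x.1 * ((x.1 : ZMod p) * (x.1 : ZMod p) * (x.2 : ZMod p))⁻¹
      = (-1 : ZMod p) ^ (p - x.1) * (((p - x.1 : ℕ) : ZMod p) * ((p - x.1 : ℕ) : ZMod p)
          * ((p - x.2 : ℕ) : ZMod p))⁻¹
    rw [zm_sign hodd (by omega), zm_cast_sub hp.pos (by omega : x.1 ≤ p),
      zm_cast_sub hp.pos (by omega : x.2 ≤ p)]
    rw [show -(x.1 : ZMod p) * -(x.1 : ZMod p) * -(x.2 : ZMod p)
        = -((x.1 : ZMod p) * (x.1 : ZMod p) * (x.2 : ZMod p)) by ring, inv_neg]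
    ring
  have hterm2 : ∀ x ∈ S.filter (fun x => x.1 ≤ x.2),
      (fun x : ℕ × ℕ => t x.1 x.2 x.2) x
        = (fun y : ℕ × ℕ => t y.2 y.1 y.1) (p - x.2, p - x.1) := by
    intro x hx
    simp only [hS, Finset.mem_filter, Finset.mem_product, Finset.mem_Icc] at hx
    show (-1 : ZMod p) ^ x.1 * ((x.1 : ZMod p) * (x.2 : ZMod p) * (x.2 : ZMod p))⁻¹
      = (-1 : ZMod p) ^ (p - x.1) * (((p - x.1 : ℕ) : ZMod p) * ((p - x.2 : ℕ) : ZMod p)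
          * ((p - x.2 : ℕ) : ZMod p))⁻¹
    rw [zm_sign hodd (by omega), zm_cast_sub hp.pos (by omega : x.1 ≤ p),
      zm_cast_sub hp.pos (by omega : x.2 ≤ p)]
    rw [show -(x.1 : ZMod p) * -(x.2 : ZMod p) * -(x.2 : ZMod p)
        = -((x.1 : ZMod p) * (x.2 : ZMod p) * (x.2 : ZMod p)) by ring, inv_neg]
    ring
  -- diagonal sums
  have hdiag2 : ∑ x ∈ S.filter (fun x => x.1 = x.2), t x.2 x.2 x.1
      = ∑ i ∈ Icc 1 n, t i i i := pair_diag n (fun a b => t b b a)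
  have hdiag1 : ∑ x ∈ S.filter (fun x => x.1 = x.2), t x.2 x.1 x.1
      = ∑ i ∈ Icc 1 n, t i i i := pair_diag n (fun a b => t b a a)
  have hdiagB : ∑ x ∈ S.filter (fun x => x.1 = x.2), t x.1 x.2 x.2
      = ∑ i ∈ Icc 1 n, t i i i := pair_diag n (fun a b => t a b b)
  -- 2A = T
  have h2A : (2 : ZMod p) * (∑ x ∈ S.filter (fun x => x.1 ≤ x.2), t x.1 x.1 x.2)
      = ∑ i ∈ Icc 1 n, t i i i := by
    have e1 := hsplitfull (fun x => t x.1 x.1 x.2)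
    rw [full1] at e1
    have e2 := hswap (fun x => t x.1 x.1 x.2)
    have e2' : ∑ x ∈ S.filter (fun x => x.1 < x.2), (fun x : ℕ × ℕ => t x.1 x.1 x.2) x.swap
        = ∑ x ∈ S.filter (fun x => x.1 < x.2), t x.2 x.2 x.1 :=
      Finset.sum_congr rfl (fun _ _ => rfl)
    have e3 := hltle (fun x => t x.2 x.2 x.1)
    rw [hdiag2] at e3
    have e4 := hrefl (fun x => t x.1 x.1 x.2) (fun y => t y.2 y.2 y.1) hterm1
    linear_combination e1 - e2 - e2' + e3 + e4
  -- 2B = T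
  have h2B : (2 : ZMod p) * (∑ x ∈ S.filter (fun x => x.1 ≤ x.2), t x.1 x.2 x.2)
      = ∑ i ∈ Icc 1 n, t i i i := by
    have e1 := hsplitfull (fun x => t x.1 x.2 x.2)
    rw [full2] at e1
    have e2 := hswap (fun x => t x.1 x.2 x.2)
    have e2' : ∑ x ∈ S.filter (fun x => x.1 < x.2), (fun x : ℕ × ℕ => t x.1 x.2 x.2) x.swap
        = ∑ x ∈ S.filter (fun x => x.1 < x.2), t x.2 x.1 x.1 :=
      Finset.sum_congr rfl (fun _ _ => rfl)
    have e3 := hltle (fun x => t x.2 x.1 x.1)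
    rw [hdiag1] at e3
    have e4 := hrefl (fun x => t x.1 x.2 x.2) (fun y => t y.2 y.1 y.1) hterm2
    linear_combination e1 - e2 - e2' + e3 + e4
  -- A + B = T
  have h2ne : (2 : ZMod p) ≠ 0 := by
    have h22 : ((2 : ℕ) : ZMod p) ≠ 0 := by
      rw [Ne, ZMod.natCast_eq_zero_iff]
      intro h
      have := Nat.le_of_dvd (by norm_num) h
      omega
    simpa using h22
  have hAB : (∑ x ∈ S.filter (fun x => x.1 ≤ x.2), t x.1 x.1 x.2)
      + (∑ x ∈ S.filter (fun x => x.1 ≤ x.2), t x.1 x.2 x.2)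
      = ∑ i ∈ Icc 1 n, t i i i := by
    apply mul_left_cancel₀ h2ne
    rw [mul_add, h2A, h2B, two_mul]
  -- peel off the top index
  have peel : ∀ m : ℕ, 1 ≤ m → ∀ f : ℕ → ZMod p,
      ∑ i ∈ Icc 1 m, f i = ∑ i ∈ Ico 1 m, f i + f m := by
    intro m hm f
    rw [← Finset.Ico_add_one_right_eq_Icc, Finset.sum_Ico_succ_top hm]
  have hsplitk : ∀ k ∈ Icc 1 n, (∑ j ∈ Icc 1 k, ∑ i ∈ Icc 1 j, t i j k)
      = (∑ j ∈ Ico 1 k, ∑ i ∈ Ico 1 j, t i j k)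
        + ((∑ i ∈ Ico 1 k, t i k k) + ∑ j ∈ Icc 1 k, t j j k) := by
    intro k hk
    rw [Finset.mem_Icc] at hk
    have h1 : ∀ j ∈ Icc 1 k, (∑ i ∈ Icc 1 j, t i j k)
        = ∑ i ∈ Ico 1 j, t i j k + t j j k := by
      intro j hj
      exact peel j (Finset.mem_Icc.mp hj).1 _
    rw [Finset.sum_congr rfl h1, Finset.sum_add_distrib,
      peel k hk.1 (fun j => ∑ i ∈ Ico 1 j, t i j k)]
    ring
  rw [Finset.sum_congr rfl hsplitk, Finset.sum_add_distrib, Finset.sum_add_distrib]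
  have hA := pair_le n (fun a b => t a a b)
  have hB := pair_lt n (fun a b => t a b b)
  have hthe := hltle (fun x => t x.1 x.2 x.2)
  rw [hdiagB] at hthe
  linear_combination -hB - hA - hthe + hAB

private lemma den_ne (hp : p.Prime) {d : ℕ} (h : ¬ p ∣ d) : ((d : ℕ) : ZMod p) ≠ 0 := by
  haveI : NeZero p := ⟨hp.pos.ne'⟩
  rwa [Ne, ZMod.natCast_eq_zero_iff]

private lemma term_facts [hpf : Fact p.Prime] {i j k : ℕ}
    (hi : 1 ≤ i) (hi2 : i ≤ p - 1) (hj : 1 ≤ j) (hj2 : j ≤ p - 1)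
    (hk : 1 ≤ k) (hk2 : k ≤ p - 1) :
    ¬ (p ∣ ((-1 : ℚ) ^ i / ((i : ℚ) * (j : ℚ) * (k : ℚ))).den) ∧
    ((((-1 : ℚ) ^ i / ((i : ℚ) * (j : ℚ) * (k : ℚ))) : ℚ) : ZMod p)
      = (-1 : ZMod p) ^ i * ((i : ZMod p) * (j : ZMod p) * (k : ZMod p))⁻¹ := by
  have hp : p.Prime := hpf.out
  have hppos := hp.pos
  have hnd : ¬ p ∣ i * j * k := by
    intro h
    rcases hp.dvd_mul.mp h with h' | h'
    · rcases hp.dvd_mul.mp h' with h'' | h''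
      · exact absurd (Nat.le_of_dvd hi h'') (by omega)
      · exact absurd (Nat.le_of_dvd hj h'') (by omega)
    · exact absurd (Nat.le_of_dvd hk h') (by omega)
  have hq : ((-1 : ℚ) ^ i / ((i : ℚ) * (j : ℚ) * (k : ℚ)))
      = (((-1) ^ i : ℤ) : ℚ) / (((i * j * k : ℕ) : ℤ) : ℚ) := by
    push_cast; ring
  constructor
  · intro hd
    have hdvd : ((Rat.divInt ((-1) ^ i : ℤ) ((i * j * k : ℕ) : ℤ)).den : ℤ)
        ∣ ((i * j * k : ℕ) : ℤ) := Rat.den_dvd _ _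
    rw [Rat.divInt_eq_div] at hdvd
    rw [hq] at hd
    have h2 : (p : ℤ) ∣ ((i * j * k : ℕ) : ℤ) :=
      dvd_trans (Int.natCast_dvd_natCast.mpr hd) hdvd
    exact hnd (Int.natCast_dvd_natCast.mp h2)
  · rw [hq, Rat.cast_div_of_ne_zero, Rat.cast_intCast, Rat.cast_intCast]
    · push_cast
      rw [div_eq_mul_inv]
    · simp
    · rw [Rat.num_intCast, Ne, ZMod.intCast_zmod_eq_zero_iff_dvd]
      intro h2
      exact hnd (Int.natCast_dvd_natCast.mp h2)

private lemma good_sum [hpf : Fact p.Prime] {ι : Type*} (s : Finset ι) (f : ι → ℚ)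
    (h : ∀ x ∈ s, ¬ p ∣ (f x).den) :
    ¬ p ∣ (∑ x ∈ s, f x).den ∧
      (((∑ x ∈ s, f x) : ℚ) : ZMod p) = ∑ x ∈ s, ((f x : ℚ) : ZMod p) := by
  have hp : p.Prime := hpf.out
  classical
  induction s using Finset.induction_on with
  | empty =>
    refine ⟨?_, by simp⟩
    rw [Finset.sum_empty]
    show ¬ p ∣ (0 : ℚ).den
    rw [Rat.den_zero, Nat.dvd_one]
    exact hp.ne_one
  | @insert a s' ha' ih =>
    have hf := h a (Finset.mem_insert_self a s')
    obtain ⟨ihd, ihc⟩ := ih fun x hx => h x (Finset.mem_insert_of_mem hx)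
    rw [Finset.sum_insert ha']
    have hadd_den : ¬ p ∣ (f a + ∑ x ∈ s', f x).den := by
      intro hd
      have h2 : (f a + ∑ x ∈ s', f x).den ∣ (f a).den * (∑ x ∈ s', f x).den :=
        Rat.add_den_dvd _ _
      rcases hp.dvd_mul.mp (hd.trans h2) with h3 | h3
      exacts [hf h3, ihd h3]
    refine ⟨hadd_den, ?_⟩
    rw [Rat.cast_add_of_ne_zero (den_ne hp hf) (den_ne hp ihd), ihc]
    rw [Finset.sum_insert ha']

private lemma lvl1 [hpf : Fact p.Prime] (s : Finset ℕ) (j k : ℕ)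
    (hs : ∀ i ∈ s, 1 ≤ i ∧ i ≤ p - 1) (hj1 : 1 ≤ j) (hj2 : j ≤ p - 1)
    (hk1 : 1 ≤ k) (hk2 : k ≤ p - 1) :
    ¬ p ∣ (∑ i ∈ s, (-1 : ℚ) ^ i / ((i : ℚ) * (j : ℚ) * (k : ℚ))).den ∧
    (((∑ i ∈ s, (-1 : ℚ) ^ i / ((i : ℚ) * (j : ℚ) * (k : ℚ))) : ℚ) : ZMod p)
      = ∑ i ∈ s, (-1 : ZMod p) ^ i * ((i : ZMod p) * (j : ZMod p) * (k : ZMod p))⁻¹ := by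
  obtain ⟨hd, hc⟩ := good_sum s _
    (fun i hi => (term_facts (hs i hi).1 (hs i hi).2 hj1 hj2 hk1 hk2).1)
  exact ⟨hd, hc.trans (Finset.sum_congr rfl fun i hi =>
    (term_facts (hs i hi).1 (hs i hi).2 hj1 hj2 hk1 hk2).2)⟩

private lemma lvl2 [hpf : Fact p.Prime] (s : Finset ℕ) (t : ℕ → Finset ℕ) (k : ℕ)
    (hs : ∀ j ∈ s, 1 ≤ j ∧ j ≤ p - 1) (ht : ∀ j ∈ s, ∀ i ∈ t j, 1 ≤ i ∧ i ≤ p - 1)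
    (hk1 : 1 ≤ k) (hk2 : k ≤ p - 1) :
    ¬ p ∣ (∑ j ∈ s, ∑ i ∈ t j, (-1 : ℚ) ^ i / ((i : ℚ) * (j : ℚ) * (k : ℚ))).den ∧
    (((∑ j ∈ s, ∑ i ∈ t j, (-1 : ℚ) ^ i / ((i : ℚ) * (j : ℚ) * (k : ℚ))) : ℚ) : ZMod p)
      = ∑ j ∈ s, ∑ i ∈ t j,
          (-1 : ZMod p) ^ i * ((i : ZMod p) * (j : ZMod p) * (k : ZMod p))⁻¹ := by
  obtain ⟨hd, hc⟩ := good_sum s _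
    (fun j hj => (lvl1 (t j) j k (ht j hj) (hs j hj).1 (hs j hj).2 hk1 hk2).1)
  exact ⟨hd, hc.trans (Finset.sum_congr rfl fun j hj =>
    (lvl1 (t j) j k (ht j hj) (hs j hj).1 (hs j hj).2 hk1 hk2).2)⟩

private lemma lvl3 [hpf : Fact p.Prime] (s : Finset ℕ) (t : ℕ → Finset ℕ)
    (u : ℕ → Finset ℕ)
    (hs : ∀ k ∈ s, 1 ≤ k ∧ k ≤ p - 1) (ht : ∀ k ∈ s, ∀ j ∈ t k, 1 ≤ j ∧ j ≤ p - 1)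
    (hu : ∀ k ∈ s, ∀ j ∈ t k, ∀ i ∈ u j, 1 ≤ i ∧ i ≤ p - 1) :
    ¬ p ∣ (∑ k ∈ s, ∑ j ∈ t k, ∑ i ∈ u j,
        (-1 : ℚ) ^ i / ((i : ℚ) * (j : ℚ) * (k : ℚ))).den ∧
    (((∑ k ∈ s, ∑ j ∈ t k, ∑ i ∈ u j,
        (-1 : ℚ) ^ i / ((i : ℚ) * (j : ℚ) * (k : ℚ))) : ℚ) : ZMod p)
      = ∑ k ∈ s, ∑ j ∈ t k, ∑ i ∈ u j,
          (-1 : ZMod p) ^ i * ((i : ZMod p) * (j : ZMod p) * (k : ZMod p))⁻¹ := by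
  obtain ⟨hd, hc⟩ := good_sum s _
    (fun k hk => (lvl2 (t k) u k (ht k hk) (hu k hk) (hs k hk).1 (hs k hk).2).1)
  exact ⟨hd, hc.trans (Finset.sum_congr rfl fun k hk =>
    (lvl2 (t k) u k (ht k hk) (hu k hk) (hs k hk).1 (hs k hk).2).2)⟩

/-- For a prime `p > 3`,
`∑_{1 ≤ i ≤ j ≤ k ≤ p-1} (-1)^i/(i·j·k) ≡ ∑_{1 ≤ i < j < k ≤ p-1} (-1)^i/(i·j·k)
(mod p)`. -/
theorem stmt_11 (p : ℕ) (hp : p.Prime) (hp3 : 3 < p) :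
    (p : ℤ) ∣
      ((∑ k ∈ Finset.Icc 1 (p - 1), ∑ j ∈ Finset.Icc 1 k, ∑ i ∈ Finset.Icc 1 j,
          (-1 : ℚ) ^ i / ((i : ℚ) * (j : ℚ) * (k : ℚ)))
        - ∑ k ∈ Finset.Icc 1 (p - 1), ∑ j ∈ Finset.Ico 1 k, ∑ i ∈ Finset.Ico 1 j,
            (-1 : ℚ) ^ i / ((i : ℚ) * (j : ℚ) * (k : ℚ))).num := by
  haveI : Fact p.Prime := ⟨hp⟩
  haveI : NeZero p := ⟨hp.pos.ne'⟩
  obtain ⟨gd1, gc1⟩ := lvl3 (p := p) (Icc 1 (p - 1)) (fun k => Icc 1 k) (fun j => Icc 1 j)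
    (fun k hk => by rw [Finset.mem_Icc] at hk; omega)
    (fun k hk j hj => by rw [Finset.mem_Icc] at hk hj; omega)
    (fun k hk j hj i hi => by rw [Finset.mem_Icc] at hk hj hi; omega)
  obtain ⟨gd2, gc2⟩ := lvl3 (p := p) (Icc 1 (p - 1)) (fun k => Ico 1 k) (fun j => Ico 1 j)
    (fun k hk => by rw [Finset.mem_Icc] at hk; omega)
    (fun k hk j hj => by rw [Finset.mem_Icc] at hk; rw [Finset.mem_Ico] at hj; omega)
    (fun k hk j hj i hi => by
      rw [Finset.mem_Icc] at hk; rw [Finset.mem_Ico] at hj hi; omega)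
  set Q1 : ℚ := ∑ k ∈ Finset.Icc 1 (p - 1), ∑ j ∈ Finset.Icc 1 k, ∑ i ∈ Finset.Icc 1 j,
      (-1 : ℚ) ^ i / ((i : ℚ) * (j : ℚ) * (k : ℚ)) with hQ1
  set Q2 : ℚ := ∑ k ∈ Finset.Icc 1 (p - 1), ∑ j ∈ Finset.Ico 1 k, ∑ i ∈ Finset.Ico 1 j,
      (-1 : ℚ) ^ i / ((i : ℚ) * (j : ℚ) * (k : ℚ)) with hQ2
  have hc : ((Q1 - Q2 : ℚ) : ZMod p) = 0 := by
    rw [Rat.cast_sub_of_ne_zero (den_ne hp gd1) (den_ne hp gd2), gc1, gc2,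
      zm_main hp hp3, sub_self]
  have hdd : ¬ p ∣ (Q1 - Q2).den := by
    intro h
    have h2 : (Q1 - Q2).den ∣ Q1.den * (-Q2).den := by
      rw [sub_eq_add_neg]; exact Rat.add_den_dvd _ _
    rw [Rat.den_neg_eq_den] at h2
    rcases hp.dvd_mul.mp (h.trans h2) with h3 | h3
    exacts [gd1 h3, gd2 h3]
  rw [Rat.cast_def] at hc
  rcases div_eq_zero_iff.mp hc with h0 | h0
  · exact (ZMod.intCast_zmod_eq_zero_iff_dvd _ _).mp h0
  · exact absurd h0 (den_ne hp hdd)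
end

section
/- Let p > 3 be a prime and let m be a positive even integer with p − 1 not dividing 3m. Then ∑_{1 ≤ j < k ≤ p-1} (1/(j^m·k^{2m}) + 1/(j^{2m}·k^m)) ≡ 0 (mod p). -/
open Finset

/-- The natural "reduction mod p" map on rationals: `num / den` in `ZMod p`. -/
noncomputable def ratZMod (p : ℕ) [Fact p.Prime] (q : ℚ) : ZMod p :=
  (q.num : ZMod p) / (q.den : ZMod p)

lemma den_dvd_div (a b : ℤ) : (((a : ℚ) / b).den : ℤ) ∣ b := by
  rw [← Rat.divInt_eq_div]; exact Rat.den_dvd a b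

lemma ratZMod_div {p : ℕ} [hp : Fact p.Prime] (a b : ℤ) (hb : ¬ (p : ℤ) ∣ b) :
    ¬ p ∣ ((a : ℚ) / b).den ∧ ratZMod p ((a : ℚ) / b) = (a : ZMod p) / (b : ZMod p) := by
  have hb0 : b ≠ 0 := by rintro rfl; exact hb (dvd_zero _)
  set q : ℚ := (a : ℚ) / b with hq
  have hdvd : (q.den : ℤ) ∣ b := den_dvd_div a b
  have hgood : ¬ p ∣ q.den := fun h => hb (dvd_trans (Int.natCast_dvd_natCast.mpr h) hdvd)
  refine ⟨hgood, ?_⟩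
  have hden0 : ((q.den : ℤ) : ℚ) ≠ 0 := by exact_mod_cast q.den_ne_zero
  have h1 : (a : ℚ) / (b : ℚ) = (q.num : ℚ) / ((q.den : ℤ) : ℚ) := by
    rw [hq]; push_cast; rw [Rat.num_div_den]
  have h2 : (a : ℚ) * ((q.den : ℤ) : ℚ) = (q.num : ℚ) * (b : ℚ) := by
    rw [div_eq_div_iff (by exact_mod_cast hb0) hden0] at h1; exact h1
  have key : a * (q.den : ℤ) = q.num * b := by exact_mod_cast h2
  have keyZ : (a : ZMod p) * ((q.den : ℕ) : ZMod p) = (q.num : ZMod p) * ((b : ℤ) : ZMod p) := by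
    have := congrArg (fun z : ℤ => (z : ZMod p)) key
    push_cast at this ⊢
    exact this
  have hbz : ((b : ℤ) : ZMod p) ≠ 0 := by
    rw [Ne, ZMod.intCast_zmod_eq_zero_iff_dvd]; exact hb
  have hdz : ((q.den : ℕ) : ZMod p) ≠ 0 := by
    rw [Ne, ZMod.natCast_eq_zero_iff]; exact hgood
  rw [ratZMod, div_eq_div_iff hdz hbz]
  exact keyZ.symm

lemma ratZMod_add {p : ℕ} [hp : Fact p.Prime] (q r : ℚ)
    (hq : ¬ p ∣ q.den) (hr : ¬ p ∣ r.den) :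
    ¬ p ∣ (q + r).den ∧ ratZMod p (q + r) = ratZMod p q + ratZMod p r := by
  have hgood : ¬ p ∣ (q + r).den := by
    intro h
    rcases (Nat.Prime.dvd_mul hp.out).mp (h.trans (Rat.add_den_dvd q r)) with h' | h'
    · exact hq h'
    · exact hr h'
  refine ⟨hgood, ?_⟩
  have hq0 : ((q.den : ℕ) : ℚ) ≠ 0 := by exact_mod_cast q.den_ne_zero
  have hr0 : ((r.den : ℕ) : ℚ) ≠ 0 := by exact_mod_cast r.den_ne_zero
  have hB : (((q.den : ℤ) * (r.den : ℤ) : ℤ) : ℚ) ≠ 0 := by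
    push_cast; exact mul_ne_zero hq0 hr0
  have hrep : q + r =
      ((q.num * (r.den : ℤ) + r.num * (q.den : ℤ) : ℤ) : ℚ)
        / (((q.den : ℤ) * (r.den : ℤ) : ℤ) : ℚ) := by
    rw [eq_div_iff hB]
    push_cast
    linear_combination (r.den : ℚ) * Rat.mul_den_eq_num q
      + (q.den : ℚ) * Rat.mul_den_eq_num r
  have hb : ¬ (p : ℤ) ∣ ((q.den : ℤ) * (r.den : ℤ)) := by
    intro h
    have : (p : ℤ) ∣ ((q.den * r.den : ℕ) : ℤ) := by push_cast; exact h
    rcases (Nat.Prime.dvd_mul hp.out).mp (Int.natCast_dvd_natCast.mp this) with h' | h'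
    · exact hq h'
    · exact hr h'
  have := (ratZMod_div (q.num * (r.den : ℤ) + r.num * (q.den : ℤ))
    ((q.den : ℤ) * (r.den : ℤ)) hb).2
  rw [hrep, this]
  have hqz : ((q.den : ℕ) : ZMod p) ≠ 0 := by
    rw [Ne, ZMod.natCast_eq_zero_iff]; exact hq
  have hrz : ((r.den : ℕ) : ZMod p) ≠ 0 := by
    rw [Ne, ZMod.natCast_eq_zero_iff]; exact hr
  simp only [ratZMod]
  push_cast
  field_simp

lemma ratZMod_sum {p : ℕ} [hp : Fact p.Prime] {ι : Type*} (s : Finset ι) (f : ι → ℚ)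
    (h : ∀ i ∈ s, ¬ p ∣ (f i).den) :
    ¬ p ∣ (∑ i ∈ s, f i).den ∧ ratZMod p (∑ i ∈ s, f i) = ∑ i ∈ s, ratZMod p (f i) := by
  classical
  induction s using Finset.cons_induction with
  | empty =>
    rw [Finset.sum_empty, Finset.sum_empty]
    refine ⟨?_, ?_⟩
    · rw [show (0 : ℚ).den = 1 from rfl, Nat.dvd_one]
      exact hp.out.ne_one
    · rw [ratZMod, show (0 : ℚ).num = 0 from rfl, show (0 : ℚ).den = 1 from rfl]
      simp
  | cons a s ha ih =>
    obtain ⟨h1, h2⟩ := ih (fun i hi => h i (Finset.mem_cons_of_mem hi))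
    have ha' := h a (Finset.mem_cons_self a s)
    rw [Finset.sum_cons, Finset.sum_cons]
    obtain ⟨g1, g2⟩ := ratZMod_add (f a) (∑ i ∈ s, f i) ha' h1
    exact ⟨g1, by rw [g2, h2]⟩

lemma offdiag_sum {R : Type*} [CommRing R] (g h : ℕ → R) (n : ℕ) :
    ∑ k ∈ Icc 1 n, ∑ j ∈ Ico 1 k, (g j * h k + g k * h j)
      = (∑ i ∈ Icc 1 n, g i) * (∑ i ∈ Icc 1 n, h i) - ∑ i ∈ Icc 1 n, g i * h i := by
  induction n with
  | zero => simp
  | succ n ih =>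
    rw [Finset.sum_Icc_succ_top (by omega), Finset.sum_Icc_succ_top (by omega),
      Finset.sum_Icc_succ_top (by omega), Finset.sum_Icc_succ_top (by omega), ih,
      Finset.Ico_add_one_right_eq_Icc, Finset.sum_add_distrib, ← Finset.sum_mul, ← Finset.mul_sum]
    ring

lemma sum_inv_pow {p : ℕ} [hp : Fact p.Prime] (r : ℕ) :
    ∑ i ∈ Icc 1 (p - 1), ((i : ZMod p)⁻¹) ^ r = if (p - 1) ∣ r then -1 else 0 := by
  classical
  have hp1 : 1 < p := hp.out.one_lt
  have step1 : ∑ i ∈ Icc 1 (p - 1), ((i : ZMod p)⁻¹) ^ r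
      = ∑ x ∈ (univ \ {0} : Finset (ZMod p)), (x⁻¹) ^ r := by
    refine Finset.sum_nbij' (fun a => (a : ZMod p)) (fun x => x.val) ?_ ?_ ?_ ?_ ?_
    · intro a ha
      have ha' := Finset.mem_Icc.mp ha
      simp only [Finset.mem_sdiff, Finset.mem_univ, Finset.mem_singleton, true_and]
      intro h0
      rw [ZMod.natCast_eq_zero_iff] at h0
      have := Nat.le_of_dvd (by omega) h0
      omega
    · intro x hx
      simp only [Finset.mem_sdiff, Finset.mem_univ, Finset.mem_singleton, true_and] at hx
      rw [Finset.mem_Icc]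
      show 1 ≤ x.val ∧ x.val ≤ p - 1
      have h1 : x.val < p := ZMod.val_lt x
      have h2 : x.val ≠ 0 := by rw [Ne, ZMod.val_eq_zero]; exact hx
      omega
    · intro a ha
      have ha' := Finset.mem_Icc.mp ha
      exact ZMod.val_cast_of_lt (by omega)
    · intro x _
      exact ZMod.natCast_rightInverse x
    · intro a _
      rfl
  have step2 : ∑ x ∈ (univ \ {0} : Finset (ZMod p)), (x⁻¹) ^ r
      = ∑ x : (ZMod p)ˣ, ((x : ZMod p))⁻¹ ^ r := by
    let φ : (ZMod p)ˣ ↪ ZMod p := ⟨fun x => x, fun _ _ h => Units.ext h⟩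
    have hmap : (univ : Finset (ZMod p)ˣ).map φ = univ \ {0} := by
      ext x
      simp only [Finset.mem_map, Finset.mem_univ, Function.Embedding.coeFn_mk, true_and,
        Finset.mem_sdiff, Finset.mem_singleton, φ]
      exact isUnit_iff_ne_zero
    rw [← hmap, Finset.sum_map]
    rfl
  have step3 : ∑ x : (ZMod p)ˣ, ((x : ZMod p))⁻¹ ^ r
      = ∑ x : (ZMod p)ˣ, ((x : ZMod p)) ^ r := by
    refine Fintype.sum_equiv (Equiv.inv (ZMod p)ˣ) _ _ (fun x => ?_)
    rw [Equiv.inv_apply, ← Units.val_inv_eq_inv_val]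
  rw [step1, step2, step3]
  have := FiniteField.sum_pow_units (ZMod p) r
  rwa [ZMod.card] at this

/-- For a prime `p > 3` and a positive even integer `m` with
`p - 1 ∤ 3m`, we have
`∑_{1 ≤ j < k ≤ p-1} (1/(j^m·k^{2m}) + 1/(j^{2m}·k^m)) ≡ 0 (mod p)`. -/
theorem stmt_12 (p : ℕ) (hp : p.Prime) (hp3 : 3 < p) (m : ℕ) (hm : 0 < m)
    (hme : Even m) (hdvd : ¬ (p - 1) ∣ 3 * m) :
    (p : ℤ) ∣
      (∑ k ∈ Finset.Icc 1 (p - 1), ∑ j ∈ Finset.Ico 1 k,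
        (1 / ((j : ℚ) ^ m * (k : ℚ) ^ (2 * m))
          + 1 / ((j : ℚ) ^ (2 * m) * (k : ℚ) ^ m))).num := by
  haveI : Fact p.Prime := ⟨hp⟩
  have hprime : Prime (p : ℤ) := Nat.prime_iff_prime_int.mp hp
  have hterm : ∀ k ∈ Finset.Icc 1 (p - 1), ∀ j ∈ Finset.Ico 1 k,
      (¬ p ∣ (1 / ((j : ℚ) ^ m * (k : ℚ) ^ (2 * m))
          + 1 / ((j : ℚ) ^ (2 * m) * (k : ℚ) ^ m)).den) ∧
      ratZMod p (1 / ((j : ℚ) ^ m * (k : ℚ) ^ (2 * m))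
          + 1 / ((j : ℚ) ^ (2 * m) * (k : ℚ) ^ m))
        = ((j : ZMod p)⁻¹) ^ m * ((k : ZMod p)⁻¹) ^ (2 * m)
          + ((j : ZMod p)⁻¹) ^ (2 * m) * ((k : ZMod p)⁻¹) ^ m := by
    intro k hk j hj
    have hk' := Finset.mem_Icc.mp hk
    have hj' := Finset.mem_Ico.mp hj
    have hpj : ¬ (p : ℤ) ∣ (j : ℤ) := by
      rw [Int.natCast_dvd_natCast]
      intro h; have := Nat.le_of_dvd (by omega) h; omega
    have hpk : ¬ (p : ℤ) ∣ (k : ℤ) := by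
      rw [Int.natCast_dvd_natCast]
      intro h; have := Nat.le_of_dvd (by omega) h; omega
    have hd1 : ¬ (p : ℤ) ∣ ((j : ℤ) ^ m * (k : ℤ) ^ (2 * m)) := by
      intro h
      rcases hprime.dvd_mul.mp h with h | h
      · exact hpj (hprime.dvd_of_dvd_pow h)
      · exact hpk (hprime.dvd_of_dvd_pow h)
    have hd2 : ¬ (p : ℤ) ∣ ((j : ℤ) ^ (2 * m) * (k : ℤ) ^ m) := by
      intro h
      rcases hprime.dvd_mul.mp h with h | h
      · exact hpj (hprime.dvd_of_dvd_pow h)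
      · exact hpk (hprime.dvd_of_dvd_pow h)
    have e1 : 1 / ((j : ℚ) ^ m * (k : ℚ) ^ (2 * m))
        = ((1 : ℤ) : ℚ) / (((j : ℤ) ^ m * (k : ℤ) ^ (2 * m) : ℤ) : ℚ) := by push_cast; ring
    have e2 : 1 / ((j : ℚ) ^ (2 * m) * (k : ℚ) ^ m)
        = ((1 : ℤ) : ℚ) / (((j : ℤ) ^ (2 * m) * (k : ℤ) ^ m : ℤ) : ℚ) := by push_cast; ring
    obtain ⟨g1, g2⟩ := ratZMod_div (p := p) 1 ((j : ℤ) ^ m * (k : ℤ) ^ (2 * m)) hd1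
    obtain ⟨g3, g4⟩ := ratZMod_div (p := p) 1 ((j : ℤ) ^ (2 * m) * (k : ℤ) ^ m) hd2
    rw [e1, e2]
    obtain ⟨a1, a2⟩ := ratZMod_add _ _ g1 g3
    refine ⟨a1, ?_⟩
    rw [a2, g2, g4]
    push_cast
    simp only [one_div, mul_inv, inv_pow]
    try ring
  have hinner : ∀ k ∈ Finset.Icc 1 (p - 1),
      ¬ p ∣ (∑ j ∈ Finset.Ico 1 k, (1 / ((j : ℚ) ^ m * (k : ℚ) ^ (2 * m))
          + 1 / ((j : ℚ) ^ (2 * m) * (k : ℚ) ^ m))).den ∧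
      ratZMod p (∑ j ∈ Finset.Ico 1 k, (1 / ((j : ℚ) ^ m * (k : ℚ) ^ (2 * m))
          + 1 / ((j : ℚ) ^ (2 * m) * (k : ℚ) ^ m)))
        = ∑ j ∈ Finset.Ico 1 k, (((j : ZMod p)⁻¹) ^ m * ((k : ZMod p)⁻¹) ^ (2 * m)
          + ((j : ZMod p)⁻¹) ^ (2 * m) * ((k : ZMod p)⁻¹) ^ m) := by
    intro k hk
    obtain ⟨h1, h2⟩ := ratZMod_sum (p := p) (Finset.Ico 1 k)
      (fun j => 1 / ((j : ℚ) ^ m * (k : ℚ) ^ (2 * m))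
          + 1 / ((j : ℚ) ^ (2 * m) * (k : ℚ) ^ m))
      (fun j hj => (hterm k hk j hj).1)
    exact ⟨h1, by rw [h2]; exact Finset.sum_congr rfl (fun j hj => (hterm k hk j hj).2)⟩
  obtain ⟨hQd, hQ⟩ := ratZMod_sum (p := p) (Finset.Icc 1 (p - 1))
    (fun k => ∑ j ∈ Finset.Ico 1 k, (1 / ((j : ℚ) ^ m * (k : ℚ) ^ (2 * m))
          + 1 / ((j : ℚ) ^ (2 * m) * (k : ℚ) ^ m)))
    (fun k hk => (hinner k hk).1)
  rw [Finset.sum_congr rfl (fun k hk => (hinner k hk).2)] at hQ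
  have hzero : ∑ k ∈ Finset.Icc 1 (p - 1), ∑ j ∈ Finset.Ico 1 k,
      (((j : ZMod p)⁻¹) ^ m * ((k : ZMod p)⁻¹) ^ (2 * m)
          + ((j : ZMod p)⁻¹) ^ (2 * m) * ((k : ZMod p)⁻¹) ^ m) = 0 := by
    have hod := offdiag_sum (fun i => ((i : ZMod p)⁻¹) ^ m)
      (fun i => ((i : ZMod p)⁻¹) ^ (2 * m)) (p - 1)
    have hre : ∑ k ∈ Finset.Icc 1 (p - 1), ∑ j ∈ Finset.Ico 1 k,
        (((j : ZMod p)⁻¹) ^ m * ((k : ZMod p)⁻¹) ^ (2 * m)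
          + ((j : ZMod p)⁻¹) ^ (2 * m) * ((k : ZMod p)⁻¹) ^ m)
        = ∑ k ∈ Finset.Icc 1 (p - 1), ∑ j ∈ Finset.Ico 1 k,
        (((j : ZMod p)⁻¹) ^ m * ((k : ZMod p)⁻¹) ^ (2 * m)
          + ((k : ZMod p)⁻¹) ^ m * ((j : ZMod p)⁻¹) ^ (2 * m)) :=
      Finset.sum_congr rfl fun k _ => Finset.sum_congr rfl fun j _ => by ring
    rw [hre, hod]
    have h3 : ∑ i ∈ Finset.Icc 1 (p - 1), ((i : ZMod p)⁻¹) ^ m * ((i : ZMod p)⁻¹) ^ (2 * m)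
        = ∑ i ∈ Finset.Icc 1 (p - 1), ((i : ZMod p)⁻¹) ^ (3 * m) :=
      Finset.sum_congr rfl fun i _ => by
        rw [← pow_add, show m + 2 * m = 3 * m by ring]
    rw [h3, sum_inv_pow, sum_inv_pow, sum_inv_pow]
    have hm' : ¬ (p - 1) ∣ m := fun h => hdvd (Dvd.dvd.mul_left h 3)
    rw [if_neg hm', if_neg hdvd]
    simp
  rw [hzero] at hQ
  rw [← ZMod.intCast_zmod_eq_zero_iff_dvd]
  rw [ratZMod, div_eq_zero_iff] at hQ
  rcases hQ with h | h
  · exact h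
  · rw [ZMod.natCast_eq_zero_iff] at h
    exact absurd h hQd
end

section
/- Let p > 3 be a prime and let m be a positive even integer with p > 3m + 1. Then ∑_{1 ≤ j < k ≤ p-1} (1/(j^{2m}·k^{m+1}) + 2/(j^{2m+1}·k^m)) ≡ C(3m,m)·B_{p-1-3m}/((m+1)·(2m+1)) (mod p). -/
open Finset

variable {p : ℕ} [hp : Fact p.Prime]

lemma norm_int_unit {z : ℤ} (h : ¬ (p:ℤ) ∣ z) : ‖(z : ℚ_[p])‖ = 1 := by
  have h1 : ‖(z : ℚ_[p])‖ ≤ 1 := Padic.norm_int_le_one _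
  have h2 : ¬ ‖(z : ℚ_[p])‖ < 1 := by rw [Padic.norm_intCast_lt_one_iff]; exact h
  linarith [lt_or_eq_of_le h1]

lemma norm_nat_unit {n : ℕ} (h0 : 0 < n) (hlt : n < p) : ‖((n:ℕ) : ℚ_[p])‖ = 1 := by
  have : ¬ (p:ℤ) ∣ (n:ℤ) := by
    rw [Int.natCast_dvd_natCast]; intro hd; have := Nat.le_of_dvd h0 hd; omega
  simpa using norm_int_unit this

lemma norm_dvd_le {z : ℤ} (h : (p:ℤ) ∣ z) : ‖(z : ℚ_[p])‖ ≤ (p:ℝ)⁻¹ := by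
  obtain ⟨w, rfl⟩ := h
  push_cast
  rw [norm_mul, Padic.norm_p]
  have h1 : ‖(w : ℚ_[p])‖ ≤ 1 := Padic.norm_int_le_one _
  have h2 : (0:ℝ) ≤ (p:ℝ)⁻¹ := by positivity
  calc (p:ℝ)⁻¹ * ‖(w : ℚ_[p])‖ ≤ (p:ℝ)⁻¹ * 1 := by gcongr
    _ = (p:ℝ)⁻¹ := mul_one _

lemma nmax (a b : ℚ_[p]) : ‖a - b‖ ≤ max ‖a‖ ‖b‖ := by
  have := Padic.nonarchimedean a (-b)
  simpa [sub_eq_add_neg] using this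

lemma zmod_sum_units (e : ℕ) :
    ∑ x : (ZMod p)ˣ, ((x : ZMod p))^e = ∑ x ∈ (univ : Finset (ZMod p)) \ {0}, x^e := by
  classical
  refine Finset.sum_bij' (fun u _ => (u : ZMod p)) (fun x hx => Units.mk0 x ?_) ?_ ?_ ?_ ?_ ?_
  · simp at hx; exact hx
  · intro u _; simp [Units.ne_zero]
  · intro x hx; simp
  · intro u _; simp
  · intro x hx; simp at hx; simp [hx]
  · intro u _; rfl

lemma zmod_pow_sum (e : ℕ) :
    ((∑ k ∈ Icc 1 (p-1), (k:ℤ)^e : ℤ) : ZMod p) = if (p-1) ∣ e then -1 else 0 := by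
  classical
  have hcast : ((∑ k ∈ Icc 1 (p-1), (k:ℤ)^e : ℤ) : ZMod p)
      = ∑ k ∈ Icc 1 (p-1), ((k:ZMod p))^e := by push_cast; rfl
  rw [hcast]
  have hbij : ∑ k ∈ Icc 1 (p-1), ((k:ZMod p))^e
      = ∑ x ∈ (univ : Finset (ZMod p)) \ {0}, x^e := by
    have hp1 : 1 < p := hp.out.one_lt
    refine Finset.sum_bij' (fun k _ => ((k:ZMod p))) (fun x _ => x.val) ?_ ?_ ?_ ?_ ?_
    · intro k hk
      simp only [mem_Icc] at hk
      simp only [mem_sdiff, mem_univ, true_and, mem_singleton]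
      have : (k : ZMod p) ≠ 0 := by
        rw [Ne, ZMod.natCast_eq_zero_iff]
        intro hd; have := Nat.le_of_dvd (by omega) hd; omega
      simpa using this
    · intro x hx
      simp only [mem_sdiff, mem_univ, true_and, mem_singleton] at hx
      simp only [mem_Icc]
      have h1 : x.val ≠ 0 := by
        intro h0; apply hx; exact (ZMod.val_eq_zero x).mp h0
      have h2 : x.val < p := ZMod.val_lt x
      omega
    · intro k hk
      simp only [mem_Icc] at hk
      exact ZMod.val_cast_of_lt (by omega)
    · intro x hx; simp [ZMod.natCast_val, ZMod.cast_id]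
    · intro k _; rfl
  rw [hbij, ← zmod_sum_units]
  have := FiniteField.sum_pow_units (ZMod p) e
  rwa [ZMod.card] at this

lemma bernoulli_padic_int : ∀ t : ℕ, t < p - 1 → ‖((bernoulli t : ℚ) : ℚ_[p])‖ ≤ 1 := by
  intro t
  induction t using Nat.strong_induction_on with
  | _ t IH =>
    intro ht
    rcases Nat.eq_zero_or_pos t with rfl | ht0
    · simp
    have hp1 : 1 < p := hp.out.one_lt
    have hppos : (0:ℝ) < (p:ℝ)⁻¹ := by positivity
    -- the Faulhaber identity, i = t term isolated
    have H := _root_.sum_range_pow p t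
    rw [Finset.sum_range_succ] at H
    have hchoose : ((t+1).choose t : ℚ) = (t:ℚ)+1 := by
      rw [Nat.choose_succ_self_right]; push_cast; ring
    have ht1 : ((t:ℚ)+1) ≠ 0 := by positivity
    have key : bernoulli t * (p:ℚ) =
        (∑ k ∈ range p, (k:ℚ)^t)
          - ∑ i ∈ range t, bernoulli i * ((t + 1).choose i) * (p:ℚ) ^ (t + 1 - i) / (t+1) := by
      rw [H, hchoose]
      have : t + 1 - t = 1 := by omega
      rw [this]
      push_cast
      field_simp
      ring
    have keyp := congrArg (fun q : ℚ => ((q : ℚ_[p]))) key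
    simp only [Rat.cast_mul, Rat.cast_sub, Rat.cast_sum, Rat.cast_div, Rat.cast_pow,
      Rat.cast_natCast, Rat.cast_add, Rat.cast_one] at keyp
    -- norm bound on RHS
    have hS : ‖(∑ k ∈ range p, ((k:ℕ):ℚ_[p])^t)‖ ≤ (p:ℝ)⁻¹ := by
      have hint : (∑ k ∈ range p, ((k:ℕ):ℚ_[p])^t) = (((∑ k ∈ range p, (k:ℤ)^t : ℤ)) : ℚ_[p]) := by
        push_cast; rfl
      rw [hint]
      apply norm_dvd_le
      -- p ∣ ∑ k ∈ range p, k^t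
      have hz : ((∑ k ∈ range p, (k:ℤ)^t : ℤ) : ZMod p) = 0 := by
        push_cast
        have : ∑ k ∈ range p, ((k:ZMod p))^t = ∑ x : ZMod p, x^t := by
          refine Finset.sum_bij' (fun k _ => ((k:ZMod p))) (fun x _ => x.val) ?_ ?_ ?_ ?_ ?_
          · intros; exact mem_univ _
          · intro x _; simp [ZMod.val_lt]
          · intro k hk; exact ZMod.val_cast_of_lt (mem_range.mp hk)
          · intro x _; simp [ZMod.natCast_val, ZMod.cast_id]
          · intros; rfl
        rw [this]
        exact FiniteField.sum_pow_lt_card_sub_one (ZMod p) t (by rw [ZMod.card]; omega)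
      exact_mod_cast (ZMod.intCast_zmod_eq_zero_iff_dvd _ p).mp hz
    have hrest : ‖(∑ i ∈ range t, ((bernoulli i : ℚ) : ℚ_[p]) * (((t + 1).choose i : ℕ):ℚ_[p]) * ((p:ℕ):ℚ_[p]) ^ (t + 1 - i) / (((t:ℚ_[p])+1)))‖ ≤ (p:ℝ)⁻¹ := by
      apply IsUltrametricDist.norm_sum_le_of_forall_le_of_nonneg (le_of_lt hppos)
      intro i hi
      rw [mem_range] at hi
      rw [norm_div, norm_mul, norm_mul, norm_pow]
      have h1 : ‖((bernoulli i : ℚ) : ℚ_[p])‖ ≤ 1 := IH i hi (by omega)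
      have h2 : ‖(((t + 1).choose i : ℕ):ℚ_[p])‖ ≤ 1 := by
        have := Padic.norm_int_le_one (p := p) ((t + 1).choose i : ℤ)
        push_cast at this ⊢; exact this
      have h3 : ‖((p:ℕ):ℚ_[p])‖ = (p:ℝ)⁻¹ := by
        have := Padic.norm_p (p := p); push_cast at this ⊢; exact this
      have h4 : ‖((t:ℚ_[p])+1)‖ = 1 := by
        have : ((t:ℚ_[p])+1) = (((t+1 : ℕ)):ℚ_[p]) := by push_cast; ring
        rw [this]; exact norm_nat_unit (by omega) (by omega)
      rw [h3, h4]
      have hexp : (p:ℝ)⁻¹ ^ (t+1-i) ≤ (p:ℝ)⁻¹ := by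
        have h1le : (p:ℝ)⁻¹ ≤ 1 := by
          rw [inv_le_one_iff₀]; right; exact_mod_cast hp1.le
        calc (p:ℝ)⁻¹ ^ (t+1-i) ≤ (p:ℝ)⁻¹ ^ 1 := by
              apply pow_le_pow_of_le_one (le_of_lt hppos) h1le; omega
          _ = (p:ℝ)⁻¹ := pow_one _
      calc ‖((bernoulli i : ℚ) : ℚ_[p])‖ * ‖(((t + 1).choose i : ℕ):ℚ_[p])‖ * (p:ℝ)⁻¹ ^ (t+1-i) / 1
          ≤ 1 * 1 * (p:ℝ)⁻¹ / 1 := by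
            rw [div_one, div_one]
            apply mul_le_mul (mul_le_mul h1 h2 (norm_nonneg _) zero_le_one) hexp (by positivity) (by norm_num)
        _ = (p:ℝ)⁻¹ := by ring
    -- combine
    have hnorm : ‖((bernoulli t : ℚ) : ℚ_[p]) * ((p:ℕ):ℚ_[p])‖ ≤ (p:ℝ)⁻¹ := by
      rw [keyp]
      exact le_trans (nmax _ _) (max_le hS hrest)

    rw [norm_mul] at hnorm
    have h3 : ‖((p:ℕ):ℚ_[p])‖ = (p:ℝ)⁻¹ := by
      have := Padic.norm_p (p := p); push_cast at this ⊢; exact this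
    rw [h3] at hnorm
    calc ‖((bernoulli t : ℚ) : ℚ_[p])‖ = ‖((bernoulli t : ℚ) : ℚ_[p])‖ * (p:ℝ)⁻¹ * p := by
          field_simp
      _ ≤ (p:ℝ)⁻¹ * p := mul_le_mul_of_nonneg_right hnorm (by positivity)
      _ = 1 := by field_simp

lemma choose_cong (a b : ℕ) (ha : 0 < a) (hab : a + b ≤ p) :
    (p:ℤ) ∣ ((p-a).choose b : ℤ) - (-1)^b * ((a+b-1).choose b : ℤ) := by
  classical
  rw [← ZMod.intCast_zmod_eq_zero_iff_dvd]
  push_cast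
  rw [sub_eq_zero]
  -- multiply both sides by b! (invertible)
  have hbfac : ((Nat.factorial b : ℕ) : ZMod p) ≠ 0 := by
    rw [Ne, ZMod.natCast_eq_zero_iff]
    intro hd
    have := (Nat.Prime.dvd_factorial hp.out).mp hd
    omega
  have key : ((Nat.factorial b : ℕ) : ZMod p) * (((p-a).choose b : ℕ) : ZMod p)
      = ((Nat.factorial b : ℕ) : ZMod p) * ((-1)^b * (((a+b-1).choose b : ℕ) : ZMod p)) := by
    have h1 : (Nat.factorial b) * ((p-a).choose b) = (p-a).descFactorial b :=
      (Nat.descFactorial_eq_factorial_mul_choose _ _).symm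
    have h2 : (Nat.factorial b) * ((a+b-1).choose b) = (a+b-1).descFactorial b :=
      (Nat.descFactorial_eq_factorial_mul_choose _ _).symm
    have e1 : (((p-a).descFactorial b : ℕ) : ZMod p) = ∏ i ∈ range b, (((p-a-i : ℕ)) : ZMod p) := by
      rw [Nat.descFactorial_eq_prod_range]; push_cast; rfl
    have e2 : (((a+b-1).descFactorial b : ℕ) : ZMod p) = ∏ i ∈ range b, (((a+b-1-i : ℕ)) : ZMod p) := by
      rw [Nat.descFactorial_eq_prod_range]; push_cast; rfl
    calc ((Nat.factorial b : ℕ) : ZMod p) * (((p-a).choose b : ℕ) : ZMod p)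
        = (((p-a).descFactorial b : ℕ) : ZMod p) := by rw [← h1]; push_cast; ring
      _ = ∏ i ∈ range b, (((p-a-i : ℕ)) : ZMod p) := e1
      _ = ∏ i ∈ range b, (-(((a+i : ℕ)) : ZMod p)) := by
          apply Finset.prod_congr rfl
          intro i hi
          rw [mem_range] at hi
          have hlt : a + i < p := by omega
          have : ((p - a - i : ℕ) : ZMod p) = ((p : ℕ) : ZMod p) - ((a + i : ℕ) : ZMod p) := by
            have : p - a - i = p - (a + i) := by omega
            rw [this, Nat.cast_sub (by omega)]
          rw [this, ZMod.natCast_self, zero_sub]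
      _ = (-1)^b * ∏ i ∈ range b, (((a+i : ℕ)) : ZMod p) := by
          rw [Finset.prod_congr rfl (fun i _ => (neg_one_mul (((a+i : ℕ) : ZMod p))).symm),
            Finset.prod_mul_distrib, Finset.prod_const, Finset.card_range]
      _ = (-1)^b * ∏ i ∈ range b, (((a+b-1-i : ℕ)) : ZMod p) := by
          congr 1
          rw [← Finset.prod_range_reflect]
          apply Finset.prod_congr rfl
          intro i hi
          rw [mem_range] at hi
          congr 1
          omega
      _ = (-1)^b * (((a+b-1).descFactorial b : ℕ) : ZMod p) := by rw [e2]
      _ = ((Nat.factorial b : ℕ) : ZMod p) * ((-1)^b * (((a+b-1).choose b : ℕ) : ZMod p)) := by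
          rw [← h2]; push_cast; ring
  exact mul_left_cancel₀ hbfac key

lemma psum_dvd (e : ℕ) (h2 : ¬ (p-1) ∣ e) : (p:ℤ) ∣ ∑ k ∈ Icc 1 (p-1), (k:ℤ)^e := by
  rw [← ZMod.intCast_zmod_eq_zero_iff_dvd, zmod_pow_sum, if_neg h2]

lemma psum_pm1 : (p:ℤ) ∣ (∑ k ∈ Icc 1 (p-1), (k:ℤ)^(p-1)) + 1 := by
  rw [← ZMod.intCast_zmod_eq_zero_iff_dvd, Int.cast_add, Int.cast_one, zmod_pow_sum,
    if_pos dvd_rfl]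
  ring

lemma Sab (a b : ℕ) (ha : 0 < a) (hb : 0 < b) (hab : a + b < p) :
    ‖(∑ k ∈ Icc 1 (p-1), ∑ j ∈ Ico 1 k, 1 / (((j:ℕ):ℚ_[p])^a * ((k:ℕ):ℚ_[p])^b))
      - (-1)^b * (((a+b-1).choose b : ℕ) : ℚ_[p]) * ((bernoulli (p-a-b) : ℚ) : ℚ_[p]) / ((a:ℕ):ℚ_[p])‖
      ≤ (p:ℝ)⁻¹ := by
  have hp1 : 1 < p := hp.out.one_lt
  have hppos : (0:ℝ) < (p:ℝ)⁻¹ := by positivity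
  set n : ℕ := p - 1 - a with hn
  set S : ℚ_[p] := ∑ k ∈ Icc 1 (p-1), ∑ j ∈ Ico 1 k, 1 / (((j:ℕ):ℚ_[p])^a * ((k:ℕ):ℚ_[p])^b) with hS
  set G : ℚ_[p] := ∑ k ∈ Icc 1 (p-1), ∑ j ∈ Ico 1 k, ((j:ℕ):ℚ_[p])^n * ((k:ℕ):ℚ_[p])^(p-1-b) with hG
  set B : ℚ_[p] := ((bernoulli (p-a-b) : ℚ) : ℚ_[p]) with hB
  set V : ℚ_[p] := (-1)^b * (((a+b-1).choose b : ℕ) : ℚ_[p]) * B / ((a:ℕ):ℚ_[p]) with hV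
  -- norms of casts of small naturals
  have hnormnat : ∀ x : ℕ, 0 < x → x < p → ‖((x:ℕ):ℚ_[p])‖ = 1 := fun x h1 h2 => norm_nat_unit h1 h2
  -- Step A : ‖S - G‖ ≤ p⁻¹
  have stepA : ‖S - G‖ ≤ (p:ℝ)⁻¹ := by
    rw [hS, hG, ← Finset.sum_sub_distrib]
    apply IsUltrametricDist.norm_sum_le_of_forall_le_of_nonneg hppos.le
    intro k hk
    rw [mem_Icc] at hk
    rw [← Finset.sum_sub_distrib]
    apply IsUltrametricDist.norm_sum_le_of_forall_le_of_nonneg hppos.le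
    intro j hj
    rw [mem_Ico] at hj
    have hj0 : 0 < j := hj.1
    have hjp : j < p := by omega
    have hk0 : 0 < k := by omega
    have hkp : k < p := by omega
    have hjne : ((j:ℕ):ℚ_[p]) ≠ 0 := by
      intro h; have := hnormnat j hj0 hjp; rw [h] at this; simp at this
    have hkne : ((k:ℕ):ℚ_[p]) ≠ 0 := by
      intro h; have := hnormnat k hk0 hkp; rw [h] at this; simp at this
    have hap : a ≤ p - 1 := by omega
    have hbp : b ≤ p - 1 := by omega
    have heq : 1 / (((j:ℕ):ℚ_[p])^a * ((k:ℕ):ℚ_[p])^b) - ((j:ℕ):ℚ_[p])^n * ((k:ℕ):ℚ_[p])^(p-1-b)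
        = (1 - ((j:ℕ):ℚ_[p])^(p-1) * ((k:ℕ):ℚ_[p])^(p-1)) / (((j:ℕ):ℚ_[p])^a * ((k:ℕ):ℚ_[p])^b) := by
      rw [hn]
      rw [show p - 1 - a = (p-1) - a from rfl]
      rw [pow_sub₀ _ hjne hap, pow_sub₀ _ hkne hbp]
      field_simp
    rw [heq, norm_div]
    have hnum : ‖1 - ((j:ℕ):ℚ_[p])^(p-1) * ((k:ℕ):ℚ_[p])^(p-1)‖ ≤ (p:ℝ)⁻¹ := by
      have hcast : 1 - ((j:ℕ):ℚ_[p])^(p-1) * ((k:ℕ):ℚ_[p])^(p-1)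
          = (((1 - ((j*k : ℕ):ℤ)^(p-1)) : ℤ) : ℚ_[p]) := by push_cast; ring
      rw [hcast]
      apply norm_dvd_le
      rw [← ZMod.intCast_zmod_eq_zero_iff_dvd]
      push_cast
      have hjk : (((j*k : ℕ)) : ZMod p) ≠ 0 := by
        rw [Ne, ZMod.natCast_eq_zero_iff]
        intro hd
        rcases (Nat.Prime.dvd_mul hp.out).mp hd with h | h
        · have := Nat.le_of_dvd hj0 h; omega
        · have := Nat.le_of_dvd hk0 h; omega
      have := ZMod.pow_card_sub_one_eq_one hjk
      push_cast at this ⊢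
      rw [this]; ring
    have hden : ‖(((j:ℕ):ℚ_[p])^a * ((k:ℕ):ℚ_[p])^b)‖ = 1 := by
      rw [norm_mul, norm_pow, norm_pow, hnormnat j hj0 hjp, hnormnat k hk0 hkp]
      simp
    rw [hden, div_one]
    exact hnum
  -- power sums
  set P : ℕ → ℚ_[p] := fun e => ∑ k ∈ Icc 1 (p-1), ((k:ℕ):ℚ_[p])^e with hP
  have hPcast : ∀ e, P e = (((∑ k ∈ Icc 1 (p-1), (k:ℤ)^e : ℤ)) : ℚ_[p]) := by
    intro e; rw [hP]; push_cast; rfl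
  have hPsmall : ∀ e, ¬ (p-1) ∣ e → ‖P e‖ ≤ (p:ℝ)⁻¹ := by
    intro e he
    rw [hPcast]; exact norm_dvd_le (psum_dvd e he)
  have hPp1 : ‖P (p-1) + 1‖ ≤ (p:ℝ)⁻¹ := by
    have h : P (p-1) + 1 = ((((∑ k ∈ Icc 1 (p-1), (k:ℤ)^(p-1)) + 1 : ℤ)) : ℚ_[p]) := by
      rw [hPcast]; push_cast; ring
    rw [h]; exact norm_dvd_le psum_pm1
  -- Step B : Faulhaber expansion
  set c : ℕ → ℚ_[p] := fun i =>
    ((bernoulli i : ℚ) : ℚ_[p]) * (((n+1).choose i : ℕ) : ℚ_[p]) / (((n:ℕ):ℚ_[p]) + 1) with hc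
  have stepB : G = ∑ i ∈ range (n+1), c i * P ((n+1-i) + (p-1-b)) := by
    have inner : ∀ k : ℕ, 0 < k → ∑ j ∈ Ico 1 k, ((j:ℕ):ℚ_[p])^n
        = ∑ i ∈ range (n+1), ((bernoulli i : ℚ):ℚ_[p]) * (((n+1).choose i : ℕ):ℚ_[p])
            * ((k:ℕ):ℚ_[p])^(n+1-i) / (((n:ℕ):ℚ_[p]) + 1) := by
      intro k hk0
      have h0 : ∑ j ∈ Ico 1 k, ((j:ℕ):ℚ_[p])^n = ∑ j ∈ range k, ((j:ℕ):ℚ_[p])^n := by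
        rw [Finset.range_eq_Ico, Finset.sum_eq_sum_Ico_succ_bot hk0]
        have hn0 : n ≠ 0 := by omega
        simp [zero_pow hn0]
      rw [h0]
      have hq := _root_.sum_range_pow k n
      have hcast := congrArg (fun q : ℚ => ((q : ℚ_[p]))) hq
      push_cast at hcast
      convert hcast using 2
    calc G = ∑ k ∈ Icc 1 (p-1), ∑ i ∈ range (n+1),
          (c i * ((k:ℕ):ℚ_[p])^(n+1-i)) * ((k:ℕ):ℚ_[p])^(p-1-b) := by
          rw [hG]
          apply Finset.sum_congr rfl
          intro k hk
          rw [mem_Icc] at hk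
          rw [← Finset.sum_mul, inner k hk.1, Finset.sum_mul]
          apply Finset.sum_congr rfl
          intro i _
          rw [hc]
          ring
      _ = ∑ i ∈ range (n+1), c i * P ((n+1-i) + (p-1-b)) := by
          rw [Finset.sum_comm]
          apply Finset.sum_congr rfl
          intro i _
          rw [hP]
          simp only []
          rw [Finset.mul_sum]
          apply Finset.sum_congr rfl
          intro k _
          rw [pow_add]
          ring
  -- Step C : split off the index i₀
  set i₀ : ℕ := p - a - b with hi₀
  have hi₀mem : i₀ ∈ range (n+1) := by rw [mem_range]; omega
  set E2 : ℚ_[p] := ∑ i ∈ (range (n+1)).erase i₀, c i * P ((n+1-i) + (p-1-b)) with hE2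
  have hcnorm : ∀ i, i < n + 1 → ‖c i‖ ≤ 1 := by
    intro i hilt
    rw [hc]
    simp only []
    rw [norm_div, norm_mul]
    have h1 : ‖((bernoulli i : ℚ) : ℚ_[p])‖ ≤ 1 := bernoulli_padic_int i (by omega)
    have h2 : ‖(((n+1).choose i : ℕ) : ℚ_[p])‖ ≤ 1 := by
      have := Padic.norm_int_le_one (p := p) ((n+1).choose i : ℤ)
      push_cast at this ⊢
      exact this
    have h3 : ‖((n:ℕ):ℚ_[p]) + 1‖ = 1 := by
      have hh : ((n:ℕ):ℚ_[p]) + 1 = (((n+1 : ℕ)):ℚ_[p]) := by push_cast; ring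
      rw [hh]; exact norm_nat_unit (by omega) (by omega)
    rw [h3, div_one]
    calc ‖((bernoulli i : ℚ) : ℚ_[p])‖ * ‖(((n+1).choose i : ℕ) : ℚ_[p])‖ ≤ 1 * 1 :=
          mul_le_mul h1 h2 (norm_nonneg _) zero_le_one
      _ = 1 := by norm_num
  have hE2norm : ‖E2‖ ≤ (p:ℝ)⁻¹ := by
    rw [hE2]
    apply IsUltrametricDist.norm_sum_le_of_forall_le_of_nonneg hppos.le
    intro i hi
    have hine : i ≠ i₀ := (Finset.mem_erase.mp hi).1
    have hilt : i < n + 1 := mem_range.mp (Finset.mem_erase.mp hi).2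
    have hPe : ‖P ((n+1-i) + (p-1-b))‖ ≤ (p:ℝ)⁻¹ := by
      apply hPsmall
      intro hdvd
      obtain ⟨cc, hcc⟩ := hdvd
      have he1 : 0 < (n+1-i) + (p-1-b) := by omega
      have he2 : (n+1-i) + (p-1-b) < 2*(p-1) := by omega
      have hcc2 : cc < 2 := by
        by_contra hcc2
        push_neg at hcc2
        have := Nat.mul_le_mul_left (p-1) hcc2
        omega
      interval_cases cc <;> omega
    calc ‖c i * P ((n+1-i) + (p-1-b))‖ = ‖c i‖ * ‖P ((n+1-i) + (p-1-b))‖ := norm_mul _ _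
      _ ≤ 1 * (p:ℝ)⁻¹ := mul_le_mul (hcnorm i hilt) hPe (norm_nonneg _) zero_le_one
      _ = (p:ℝ)⁻¹ := one_mul _
  have hsplit : G = c i₀ * P (p-1) + E2 := by
    have hexp : n + 1 - i₀ + (p - 1 - b) = p - 1 := by omega
    rw [stepB, ← Finset.add_sum_erase _ _ hi₀mem, hexp, hE2]
  set E3 : ℚ_[p] := c i₀ * (P (p-1) + 1) with hE3
  have hE3norm : ‖E3‖ ≤ (p:ℝ)⁻¹ := by
    rw [hE3, norm_mul]
    calc ‖c i₀‖ * ‖P (p-1) + 1‖ ≤ 1 * (p:ℝ)⁻¹ :=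
          mul_le_mul (hcnorm i₀ (mem_range.mp hi₀mem)) hPp1 (norm_nonneg _) zero_le_one
      _ = (p:ℝ)⁻¹ := one_mul _
  -- Step D : the constant term
  set Δ : ℚ_[p] := -(c i₀) - V with hΔ
  have hΔnorm : ‖Δ‖ ≤ (p:ℝ)⁻¹ := by
    obtain ⟨z, hz⟩ := choose_cong (p := p) a b ha (by omega)
    rw [sub_eq_iff_eq_add] at hz
    have hzc : (((p-a).choose b : ℕ) : ℚ_[p])
        = (-1)^b * (((a+b-1).choose b : ℕ) : ℚ_[p]) + ((p:ℕ):ℚ_[p]) * ((z:ℤ):ℚ_[p]) := by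
      have h := congrArg (fun w : ℤ => ((w : ℚ_[p]))) hz
      push_cast at h
      linear_combination h
    have hchoose : (n+1).choose i₀ = (p-a).choose b := by
      rw [hi₀, show p - a - b = (p - a) - b from rfl, show n + 1 = p - a by omega]
      exact Nat.choose_symm (by omega)
    have hd : ((n:ℕ):ℚ_[p]) + 1 = ((p:ℕ):ℚ_[p]) - ((a:ℕ):ℚ_[p]) := by
      have h1 : ((n:ℕ):ℚ_[p]) + 1 = (((n+1:ℕ)):ℚ_[p]) := by push_cast; ring
      have h2 : ((n+1 : ℕ)) = p - a := by omega
      rw [h1, h2, Nat.cast_sub (by omega)]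
    have hAne : ((a:ℕ):ℚ_[p]) ≠ 0 := by
      intro h; have := norm_nat_unit (p := p) ha (by omega); rw [h] at this; simp at this
    have hdne : ((n:ℕ):ℚ_[p]) + 1 ≠ 0 := by
      intro h
      have hh : ((n:ℕ):ℚ_[p]) + 1 = (((n+1 : ℕ)):ℚ_[p]) := by push_cast; ring
      have := norm_nat_unit (p := p) (show 0 < n+1 by omega) (by omega)
      rw [← hh, h] at this; simp at this
    have hBnorm : ‖B‖ ≤ 1 := bernoulli_padic_int (p-a-b) (by omega)
    have hkey : Δ = -(((p:ℕ):ℚ_[p])) * B *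
        ((((a:ℕ):ℚ_[p]) * ((z:ℤ):ℚ_[p]) + (-1)^b * (((a+b-1).choose b : ℕ) : ℚ_[p])))
          / (((a:ℕ):ℚ_[p]) * (((n:ℕ):ℚ_[p]) + 1)) := by
      have hdne' : ((p:ℕ):ℚ_[p]) - ((a:ℕ):ℚ_[p]) ≠ 0 := hd ▸ hdne
      rw [hΔ, hc, hV, hB]
      simp only []
      rw [hchoose, hzc, hd]
      field_simp
      ring
    have h1 : ‖((p:ℕ):ℚ_[p])‖ = (p:ℝ)⁻¹ := by
      have := Padic.norm_p (p := p); push_cast at this ⊢; exact this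
    have h2 : ‖(((a:ℕ):ℚ_[p]) * ((z:ℤ):ℚ_[p]) + (-1)^b * (((a+b-1).choose b : ℕ) : ℚ_[p]))‖ ≤ 1 := by
      have hint : (((a:ℕ):ℚ_[p]) * ((z:ℤ):ℚ_[p]) + (-1)^b * (((a+b-1).choose b : ℕ) : ℚ_[p]))
          = ((((a:ℤ) * z + (-1)^b * ((a+b-1).choose b : ℤ)) : ℤ) : ℚ_[p]) := by push_cast; ring
      rw [hint]
      exact Padic.norm_int_le_one _
    have h3 : ‖((a:ℕ):ℚ_[p]) * (((n:ℕ):ℚ_[p]) + 1)‖ = 1 := by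
      rw [norm_mul]
      have ha1 : ‖((a:ℕ):ℚ_[p])‖ = 1 := norm_nat_unit ha (by omega)
      have hh : ((n:ℕ):ℚ_[p]) + 1 = (((n+1 : ℕ)):ℚ_[p]) := by push_cast; ring
      have hd1 : ‖((n:ℕ):ℚ_[p]) + 1‖ = 1 := by
        rw [hh]; exact norm_nat_unit (by omega) (by omega)
      rw [ha1, hd1]; norm_num
    rw [hkey, norm_div, h3, div_one, norm_mul, norm_mul, norm_neg, h1]
    calc (p:ℝ)⁻¹ * ‖B‖ * ‖(((a:ℕ):ℚ_[p]) * ((z:ℤ):ℚ_[p]) + (-1)^b * (((a+b-1).choose b : ℕ) : ℚ_[p]))‖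
        ≤ (p:ℝ)⁻¹ * 1 * 1 := by
          apply mul_le_mul _ h2 (norm_nonneg _) (by positivity)
          exact mul_le_mul le_rfl hBnorm (norm_nonneg _) (by positivity)
      _ = (p:ℝ)⁻¹ := by ring
  -- assembly
  have hasm : S - V = (S - G) + E2 + E3 + Δ := by
    have h2 : c i₀ * P (p-1) = E3 - c i₀ := by rw [hE3]; ring
    rw [hΔ]
    rw [hsplit, h2]
    ring
  rw [hasm]
  have tri : ∀ x y : ℚ_[p], ‖x‖ ≤ (p:ℝ)⁻¹ → ‖y‖ ≤ (p:ℝ)⁻¹ → ‖x+y‖ ≤ (p:ℝ)⁻¹ :=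
    fun x y hx hy => le_trans (Padic.nonarchimedean x y) (max_le hx hy)
  exact tri _ _ (tri _ _ (tri _ _ stepA hE2norm) hE3norm) hΔnorm

/-- For a prime `p > 3` and a positive even integer `m` with
`p > 3m + 1`, we have
`∑_{1 ≤ j < k ≤ p-1} (1/(j^{2m}·k^{m+1}) + 2/(j^{2m+1}·k^m))
  ≡ C(3m,m)·B_{p-1-3m}/((m+1)·(2m+1)) (mod p)`. -/
theorem stmt_16 (p : ℕ) (hp : p.Prime) (hp3 : 3 < p) (m : ℕ) (hm : 0 < m)
    (hme : Even m) (hpm : 3 * m + 1 < p) :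
    (p : ℤ) ∣
      ((∑ k ∈ Finset.Icc 1 (p - 1), ∑ j ∈ Finset.Ico 1 k,
          (1 / ((j : ℚ) ^ (2 * m) * (k : ℚ) ^ (m + 1))
            + 2 / ((j : ℚ) ^ (2 * m + 1) * (k : ℚ) ^ m)))
        - ((3 * m).choose m : ℚ) * bernoulli (p - 1 - 3 * m)
            / ((m + 1) * (2 * m + 1))).num := by
  haveI : Fact p.Prime := ⟨hp⟩
  have hp1 : 1 < p := hp.one_lt
  set q : ℚ := (∑ k ∈ Finset.Icc 1 (p - 1), ∑ j ∈ Finset.Ico 1 k,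
          (1 / ((j : ℚ) ^ (2 * m) * (k : ℚ) ^ (m + 1))
            + 2 / ((j : ℚ) ^ (2 * m + 1) * (k : ℚ) ^ m)))
        - ((3 * m).choose m : ℚ) * bernoulli (p - 1 - 3 * m)
            / ((m + 1) * (2 * m + 1)) with hqdef
  suffices hsmall : ‖((q : ℚ) : ℚ_[p])‖ < 1 by
    have hnum : ((q.num : ℤ) : ℚ_[p]) = ((q : ℚ) : ℚ_[p]) * ((q.den : ℤ) : ℚ_[p]) := by
      have hdenne : ((q.den:ℕ):ℚ_[p]) ≠ 0 := Nat.cast_ne_zero.mpr q.den_nz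
      rw [Rat.cast_def]
      push_cast
      field_simp
    rw [← Padic.norm_intCast_lt_one_iff]
    rw [hnum, norm_mul]
    calc ‖((q : ℚ) : ℚ_[p])‖ * ‖((q.den : ℤ) : ℚ_[p])‖ ≤ ‖((q : ℚ) : ℚ_[p])‖ * 1 := by
          have := Padic.norm_int_le_one (p := p) (q.den : ℤ)
          have h0 : (0:ℝ) ≤ ‖((q : ℚ) : ℚ_[p])‖ := norm_nonneg _
          exact mul_le_mul le_rfl this (norm_nonneg _) h0
      _ = ‖((q : ℚ) : ℚ_[p])‖ := mul_one _
      _ < 1 := hsmall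
  -- now the analytic bound
  have hppos : (0:ℝ) < (p:ℝ)⁻¹ := by positivity
  have hplt : (p:ℝ)⁻¹ < 1 := by
    rw [inv_lt_one_iff₀]; right; exact_mod_cast hp1
  refine lt_of_le_of_lt ?_ hplt
  -- cast q into ℚ_[p]
  set S1 : ℚ_[p] := ∑ k ∈ Icc 1 (p-1), ∑ j ∈ Ico 1 k,
      1 / (((j:ℕ):ℚ_[p])^(2*m) * ((k:ℕ):ℚ_[p])^(m+1)) with hS1
  set S2 : ℚ_[p] := ∑ k ∈ Icc 1 (p-1), ∑ j ∈ Ico 1 k,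
      1 / (((j:ℕ):ℚ_[p])^(2*m+1) * ((k:ℕ):ℚ_[p])^m) with hS2
  set B : ℚ_[p] := ((bernoulli (p - 1 - 3*m) : ℚ) : ℚ_[p]) with hB
  set Tp : ℚ_[p] := (((3 * m).choose m : ℕ) : ℚ_[p]) * B / (((m:ℚ_[p]) + 1) * (2 * (m:ℚ_[p]) + 1))
    with hTp
  have hcast : ((q : ℚ) : ℚ_[p]) = (S1 + 2 * S2) - Tp := by
    rw [hqdef]
    push_cast
    rw [hS1, hS2, hTp, hB]
    congr 1
    rw [Finset.mul_sum, ← Finset.sum_add_distrib]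
    apply Finset.sum_congr rfl
    intro k _
    rw [Finset.mul_sum, ← Finset.sum_add_distrib]
    apply Finset.sum_congr rfl
    intro j _
    ring
  rw [hcast]
  -- the two approximants
  have h1 := Sab (p := p) (2*m) (m+1) (by omega) (by omega) (by omega)
  have h2 := Sab (p := p) (2*m+1) m (by omega) (by omega) (by omega)
  rw [show p - 2*m - (m+1) = p - 1 - 3*m by omega, show 2*m + (m+1) - 1 = 3*m by omega] at h1
  rw [show p - (2*m+1) - m = p - 1 - 3*m by omega, show 2*m+1 + m - 1 = 3*m by omega] at h2
  set V1 : ℚ_[p] := (-1)^(m+1) * (((3*m).choose (m+1) : ℕ) : ℚ_[p]) * B / ((2*m : ℕ):ℚ_[p])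
    with hV1
  set V2 : ℚ_[p] := (-1)^m * (((3*m).choose m : ℕ) : ℚ_[p]) * B / ((2*m+1 : ℕ):ℚ_[p]) with hV2
  have h1' : ‖S1 - V1‖ ≤ (p:ℝ)⁻¹ := h1
  have h2' : ‖S2 - V2‖ ≤ (p:ℝ)⁻¹ := h2
  -- exact cancellation of main terms
  have hm2 : (m:ℚ_[p]) ≠ 0 := Nat.cast_ne_zero.mpr (by omega)
  have hm1 : ((m:ℚ_[p]) + 1) ≠ 0 := by
    have : ((m:ℚ_[p]) + 1) = (((m+1:ℕ)):ℚ_[p]) := by push_cast; ring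
    rw [this]; exact Nat.cast_ne_zero.mpr (by omega)
  have hm3 : (2*(m:ℚ_[p]) + 1) ≠ 0 := by
    have : (2*(m:ℚ_[p]) + 1) = (((2*m+1:ℕ)):ℚ_[p]) := by push_cast; ring
    rw [this]; exact Nat.cast_ne_zero.mpr (by omega)
  have hchooseid : ((3*m).choose (m+1) : ℚ_[p]) * ((m:ℚ_[p]) + 1)
      = ((3*m).choose m : ℚ_[p]) * (2*(m:ℚ_[p])) := by
    have hN : (3*m).choose (m+1) * (m+1) = (3*m).choose m * (2*m) := by
      have := Nat.choose_succ_right_eq (3*m) m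
      rw [show 3*m - m = 2*m by omega] at this
      exact this
    have := congrArg (fun w : ℕ => ((w : ℚ_[p]))) hN
    push_cast at this
    linear_combination this
  have hsign1 : ((-1 : ℚ_[p]))^(m+1) = -1 := Odd.neg_one_pow (Even.add_one hme)
  have hsign2 : ((-1 : ℚ_[p]))^m = 1 := Even.neg_one_pow hme
  have hzero : V1 + 2 * V2 - Tp = 0 := by
    rw [hV1, hV2, hTp, hsign1, hsign2]
    push_cast
    field_simp
    linear_combination (-(B) * (2*(m:ℚ_[p])+1)) * hchooseid
  have hdecomp : (S1 + 2 * S2) - Tp = (S1 - V1) + 2 * (S2 - V2) := by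
    linear_combination hzero
  rw [hdecomp]
  have tri : ∀ x y : ℚ_[p], ‖x‖ ≤ (p:ℝ)⁻¹ → ‖y‖ ≤ (p:ℝ)⁻¹ → ‖x+y‖ ≤ (p:ℝ)⁻¹ :=
    fun x y hx hy => le_trans (Padic.nonarchimedean x y) (max_le hx hy)
  apply tri _ _ h1'
  rw [norm_mul]
  have h2le : ‖(2:ℚ_[p])‖ ≤ 1 := by
    have := Padic.norm_int_le_one (p := p) 2
    push_cast at this ⊢
    exact this
  calc ‖(2:ℚ_[p])‖ * ‖S2 - V2‖ ≤ 1 * (p:ℝ)⁻¹ :=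
        mul_le_mul h2le h2' (norm_nonneg _) zero_le_one
    _ = (p:ℝ)⁻¹ := one_mul _
end

section
/- Let p > 3 be a prime and let m be a positive even integer with p > 3m + 1. Then ∑_{1 ≤ j < k ≤ p-1} 1/(j^{2m+1}·k^{m}) ≡ ((−1)^{m}/(2m+1))·C(3m, m)·B_{p-1-3m} (mod p). -/
open Finset

namespace Stmt18

variable {p : ℕ} [hpf : Fact p.Prime]

/-- `x ≡ y` mod the maximal ideal of `ℤ_[p]`. -/
def Rel (x y : ℚ_[p]) : Prop := ‖x - y‖ < 1

lemma Rel.of_eq {x y : ℚ_[p]} (h : x = y) : Rel x y := by simp [Rel, h]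

lemma Rel.refl (x : ℚ_[p]) : Rel x x := Rel.of_eq rfl

lemma Rel.symm {x y : ℚ_[p]} (h : Rel x y) : Rel y x := by
  unfold Rel at *; rwa [← norm_neg, neg_sub]

lemma Rel.trans {x y z : ℚ_[p]} (h1 : Rel x y) (h2 : Rel y z) : Rel x z := by
  unfold Rel at *
  have := Padic.nonarchimedean (x - y) (y - z)
  simp only [sub_add_sub_cancel] at this
  calc ‖x - z‖ ≤ max ‖x - y‖ ‖y - z‖ := this
    _ < 1 := max_lt h1 h2

lemma Rel.add {x x' y y' : ℚ_[p]} (h1 : Rel x x') (h2 : Rel y y') : Rel (x + y) (x' + y') := by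
  unfold Rel at *
  have : x + y - (x' + y') = (x - x') + (y - y') := by ring
  rw [this]
  calc ‖x - x' + (y - y')‖ ≤ max ‖x - x'‖ ‖y - y'‖ := Padic.nonarchimedean _ _
    _ < 1 := max_lt h1 h2

lemma Rel.neg {x x' : ℚ_[p]} (h : Rel x x') : Rel (-x) (-x') := by
  unfold Rel at *; rwa [← norm_neg, neg_sub, sub_neg_eq_add, neg_add_eq_sub]

lemma Rel.mul {x x' y y' : ℚ_[p]} (hx : ‖x‖ ≤ 1) (hy' : ‖y'‖ ≤ 1)
    (h1 : Rel x x') (h2 : Rel y y') : Rel (x * y) (x' * y') := by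
  unfold Rel at *
  have e : x * y - x' * y' = x * (y - y') + (x - x') * y' := by ring
  rw [e]
  calc ‖x * (y - y') + (x - x') * y'‖ ≤ max ‖x * (y - y')‖ ‖(x - x') * y'‖ :=
        Padic.nonarchimedean _ _
    _ < 1 := by
        apply max_lt
        · rw [norm_mul]
          calc ‖x‖ * ‖y - y'‖ ≤ 1 * ‖y - y'‖ := by
                exact mul_le_mul_of_nonneg_right hx (norm_nonneg _)
            _ < 1 := by rwa [one_mul]
        · rw [norm_mul]
          calc ‖x - x'‖ * ‖y'‖ ≤ ‖x - x'‖ * 1 := by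
                exact mul_le_mul_of_nonneg_left hy' (norm_nonneg _)
            _ < 1 := by rwa [mul_one]

lemma Rel.sum {ι : Type*} {s : Finset ι} {f g : ι → ℚ_[p]}
    (h : ∀ i ∈ s, Rel (f i) (g i)) : Rel (∑ i ∈ s, f i) (∑ i ∈ s, g i) := by
  classical
  induction s using Finset.induction_on with
  | empty => simpa using Rel.refl 0
  | insert a s hx ih =>
      rw [Finset.sum_insert hx, Finset.sum_insert hx]
      exact Rel.add (h a (mem_insert_self a s)) (ih fun i hi => h i (mem_insert_of_mem hi))

lemma rel_int {a b : ℤ} (h : (a : ZMod p) = (b : ZMod p)) :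
    Rel (a : ℚ_[p]) (b : ℚ_[p]) := by
  unfold Rel
  have hd : (p : ℤ) ∣ a - b := by
    exact dvd_sub_comm.mp ((ZMod.intCast_eq_intCast_iff a b p).mp h).dvd
  have : ((a : ℚ_[p]) - b) = ((a - b : ℤ) : ℚ_[p]) := by push_cast; ring
  rw [this, Padic.norm_intCast_lt_one_iff]
  exact hd

lemma norm_nat_le (n : ℕ) : ‖(n : ℚ_[p])‖ ≤ 1 := by
  have := Padic.norm_int_le_one (p := p) (n : ℤ)
  push_cast at this; exact this

lemma norm_nat_eq_one {n : ℕ} (h : ¬ p ∣ n) : ‖(n : ℚ_[p])‖ = 1 := by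
  have h1 := Padic.norm_int_le_one (p := p) (n : ℤ)
  have h2 : ¬ ‖((n : ℤ) : ℚ_[p])‖ < 1 := by
    rw [Padic.norm_intCast_lt_one_iff]; exact_mod_cast h
  push_cast at h1 h2
  linarith

lemma nat_cast_ne_zero {n : ℕ} (h : ¬ p ∣ n) : (n : ℚ_[p]) ≠ 0 := by
  intro h0
  have := norm_nat_eq_one (p := p) h
  rw [h0, norm_zero] at this
  norm_num at this

lemma rel_one_div {x y : ℚ_[p]} (hx : ‖x‖ = 1) (h : Rel (y * x) 1) : Rel (1 / x) y := by
  unfold Rel at *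
  have hx0 : x ≠ 0 := by intro h0; rw [h0, norm_zero] at hx; norm_num at hx
  have e : 1 / x - y = (1 - y * x) / x := by field_simp
  rw [e, norm_div, hx, div_one, ← norm_neg, neg_sub]
  exact h

lemma rel_div {A B : ℤ} {u v : ℕ} (hu : ¬ p ∣ u) (hv : ¬ p ∣ v)
    (h : (A : ZMod p) * (v : ZMod p) = (B : ZMod p) * (u : ZMod p)) :
    Rel ((A : ℚ_[p]) / (u : ℚ_[p])) ((B : ℚ_[p]) / (v : ℚ_[p])) := by
  have hu0 : (u : ℚ_[p]) ≠ 0 := nat_cast_ne_zero hu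
  have hv0 : (v : ℚ_[p]) ≠ 0 := nat_cast_ne_zero hv
  have key : Rel ((A * v - B * u : ℤ) : ℚ_[p]) ((0 : ℤ) : ℚ_[p]) := by
    apply rel_int
    push_cast
    rw [h]; ring
  unfold Rel at *
  have e : (A : ℚ_[p]) / u - (B : ℚ_[p]) / v
      = ((A * v - B * u : ℤ) : ℚ_[p]) / ((u : ℚ_[p]) * v) := by
    push_cast
    field_simp
  rw [e, norm_div, norm_mul, norm_nat_eq_one hu, norm_nat_eq_one hv]
  simpa using key



lemma cast_p_sub {x : ℕ} (hx : x ≤ p) : ((p - x : ℕ) : ZMod p) = -(x : ZMod p) := by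
  have h : ((p - x : ℕ) : ZMod p) + (x : ZMod p) = 0 := by
    rw [← Nat.cast_add, Nat.sub_add_cancel hx, ZMod.natCast_self]
  linear_combination h

lemma zmod_pow_sum {n : ℕ} (hn : 0 < n) :
    (∑ k ∈ Icc 1 (p - 1), ((k : ZMod p)) ^ n) = if (p - 1) ∣ n then -1 else 0 := by
  classical
  have hp1 : 1 ≤ p := hpf.out.pos
  have h1 : ∑ k ∈ Icc 1 (p - 1), ((k : ZMod p)) ^ n = ∑ k ∈ range p, ((k : ZMod p)) ^ n := by
    have hins : range p = insert 0 (Icc 1 (p - 1)) := by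
      ext k
      simp only [mem_range, mem_insert, mem_Icc]
      omega
    rw [hins, Finset.sum_insert (by simp)]
    simp [zero_pow hn.ne']
  have h2 : ∑ k ∈ range p, ((k : ZMod p)) ^ n = ∑ x : ZMod p, x ^ n := by
    refine Finset.sum_nbij' (fun k => (k : ZMod p)) (fun x => x.val) ?_ ?_ ?_ ?_ ?_
    · intro a _; exact mem_univ _
    · intro x _; exact mem_range.mpr (ZMod.val_lt x)
    · intro a ha; exact ZMod.val_cast_of_lt (mem_range.mp ha)
    · intro x _; exact ZMod.natCast_zmod_val x
    · intro a _; rfl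
  have h3 : ∑ x : ZMod p, x ^ n = ∑ x : (ZMod p)ˣ, ((x : ZMod p)) ^ n := by
    have h0 : ∑ x : ZMod p, x ^ n = ∑ x ∈ (univ : Finset (ZMod p)) \ {0}, x ^ n := by
      rw [← Finset.sum_sdiff (Finset.subset_univ ({0} : Finset (ZMod p))),
        Finset.sum_singleton, zero_pow hn.ne', add_zero]
    have h4 : (univ : Finset (ZMod p)ˣ).map ⟨Units.val, Units.val_injective⟩
        = (univ : Finset (ZMod p)) \ {0} := by
      ext x
      simp only [mem_map, mem_univ, Function.Embedding.coeFn_mk, true_and, mem_sdiff,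
        mem_singleton]
      constructor
      · rintro ⟨a, rfl⟩; exact a.ne_zero
      · intro hx; exact ⟨(isUnit_iff_ne_zero.mpr hx).unit, (isUnit_iff_ne_zero.mpr hx).unit_spec⟩
    rw [h0, ← h4, Finset.sum_map]
    rfl
  rw [h1, h2, h3]
  have := FiniteField.sum_pow_units (ZMod p) n
  rwa [ZMod.card p] at this

lemma zmod_choose {m : ℕ} (hm : 0 < m) (h3m : 3 * m < p) :
    (((p - (2 * m + 1)).choose m : ℕ) : ZMod p) = (-1) ^ m * (((3 * m).choose m : ℕ) : ZMod p) := by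
  have hfac : (m.factorial : ZMod p) ≠ 0 := by
    rw [Ne, ZMod.natCast_eq_zero_iff]
    intro hd
    have := (Nat.Prime.dvd_factorial hpf.out).mp hd
    omega
  apply mul_left_cancel₀ hfac
  have e1 : (m.factorial * (p - (2 * m + 1)).choose m : ℕ) = (p - (2 * m + 1)).descFactorial m :=
    (Nat.descFactorial_eq_factorial_mul_choose _ _).symm
  have e2 : (m.factorial * (3 * m).choose m : ℕ) = (3 * m).descFactorial m :=
    (Nat.descFactorial_eq_factorial_mul_choose _ _).symm
  have lhs : (m.factorial : ZMod p) * (((p - (2 * m + 1)).choose m : ℕ) : ZMod p)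
      = ∏ i ∈ range m, (((p - (2 * m + 1) - i : ℕ)) : ZMod p) := by
    rw [← Nat.cast_mul, e1, Nat.descFactorial_eq_prod_range, Nat.cast_prod]
  have rhs : (m.factorial : ZMod p) * (((3 * m).choose m : ℕ) : ZMod p)
      = ∏ i ∈ range m, (((2 * m + 1 + i : ℕ)) : ZMod p) := by
    rw [← Nat.cast_mul, e2, Nat.descFactorial_eq_prod_range, Nat.cast_prod]
    rw [← Finset.prod_range_reflect]
    apply Finset.prod_congr rfl
    intro i hi
    have : 3 * m - (m - 1 - i) = 2 * m + 1 + i := by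
      have := mem_range.mp hi; omega
    rw [this]
  have mid : ∏ i ∈ range m, (((p - (2 * m + 1) - i : ℕ)) : ZMod p)
      = (-1) ^ m * ∏ i ∈ range m, (((2 * m + 1 + i : ℕ)) : ZMod p) := by
    have key : ∀ i ∈ range m, ((p - (2 * m + 1) - i : ℕ) : ZMod p)
        = (-1) * ((2 * m + 1 + i : ℕ) : ZMod p) := by
      intro i hi
      have hi' := mem_range.mp hi
      have e : p - (2 * m + 1) - i = p - (2 * m + 1 + i) := by omega
      rw [e, cast_p_sub (by omega)]
      ring
    rw [Finset.prod_congr rfl key, Finset.prod_mul_distrib, Finset.prod_const,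
      Finset.card_range]
  rw [lhs, mid, ← rhs]
  ring

lemma norm_sum_le_one {ι : Type*} {s : Finset ι} {f : ι → ℚ_[p]}
    (h : ∀ i ∈ s, ‖f i‖ ≤ 1) : ‖∑ i ∈ s, f i‖ ≤ 1 := by
  classical
  induction s using Finset.induction_on with
  | empty => simp
  | insert a s hx ih =>
      rw [Finset.sum_insert hx]
      calc ‖f a + ∑ i ∈ s, f i‖ ≤ max ‖f a‖ ‖∑ i ∈ s, f i‖ := Padic.nonarchimedean _ _
        _ ≤ 1 := max_le (h a (mem_insert_self a s))
              (ih fun i hi => h i (mem_insert_of_mem hi))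

lemma norm_bernoulli'_le : ∀ n : ℕ, n + 1 < p → ‖((bernoulli' n : ℚ) : ℚ_[p])‖ ≤ 1 := by
  intro n
  induction n using Nat.strong_induction_on with
  | _ n ih =>
    intro hn
    rw [bernoulli'_def]
    push_cast
    have h1 : ‖(1 : ℚ_[p])‖ ≤ 1 := by simp
    have h2 : ‖∑ k ∈ range n, ((n.choose k : ℚ_[p]) / ((n : ℚ_[p]) - k + 1)
        * ((bernoulli' k : ℚ) : ℚ_[p]))‖ ≤ 1 := by
      apply norm_sum_le_one
      intro k hk
      have hkn := mem_range.mp hk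
      have hden : ((n : ℚ_[p]) - k + 1) = ((n - k + 1 : ℕ) : ℚ_[p]) := by
        push_cast [Nat.cast_sub hkn.le]
        ring
      have hd1 : ‖((n - k + 1 : ℕ) : ℚ_[p])‖ = 1 := by
        apply norm_nat_eq_one
        intro hdvd
        have := Nat.le_of_dvd (by omega) hdvd
        omega
      rw [norm_mul, norm_div, hden, hd1, div_one]
      calc ‖(n.choose k : ℚ_[p])‖ * ‖((bernoulli' k : ℚ) : ℚ_[p])‖
          ≤ 1 * 1 := by
            apply mul_le_mul (norm_nat_le _) (ih k hkn (by omega)) (norm_nonneg _) zero_le_one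
        _ = 1 := by norm_num
    calc ‖(1 : ℚ_[p]) - ∑ k ∈ range n, ((n.choose k : ℚ_[p]) / ((n : ℚ_[p]) - k + 1)
          * ((bernoulli' k : ℚ) : ℚ_[p]))‖
        ≤ max ‖(1:ℚ_[p])‖ ‖∑ k ∈ range n, ((n.choose k : ℚ_[p]) / ((n : ℚ_[p]) - k + 1)
          * ((bernoulli' k : ℚ) : ℚ_[p]))‖ := by
          rw [sub_eq_add_neg]
          have := Padic.nonarchimedean (p := p) (1 : ℚ_[p])
            (-(∑ k ∈ range n, ((n.choose k : ℚ_[p]) / ((n : ℚ_[p]) - k + 1)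
              * ((bernoulli' k : ℚ) : ℚ_[p]))))
          simpa using this
      _ ≤ 1 := max_le h1 h2

lemma norm_bernoulli_le (n : ℕ) (hn : n + 1 < p) : ‖((bernoulli n : ℚ) : ℚ_[p])‖ ≤ 1 := by
  rw [bernoulli]
  push_cast
  rw [norm_mul, norm_pow, norm_neg, norm_one, one_pow, one_mul]
  exact norm_bernoulli'_le n hn


lemma main_rel (m : ℕ) (hm : 0 < m) (hpm : 3 * m + 1 < p) :
    Rel (∑ k ∈ Icc 1 (p - 1), ∑ j ∈ Ico 1 k,
          1 / ((j : ℚ_[p]) ^ (2 * m + 1) * (k : ℚ_[p]) ^ m))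
      ((-1 : ℚ_[p]) ^ m / (2 * (m : ℚ_[p]) + 1) * (((3 * m).choose m : ℕ) : ℚ_[p])
        * ((bernoulli (p - 1 - 3 * m) : ℚ) : ℚ_[p])) := by
  classical
  have hP := hpf.out
  have hp2 : 2 ≤ p := hP.two_le
  set a := p - (2 * m + 2) with ha
  set b := p - 1 - m with hb
  set i0 := p - 1 - 3 * m with hi0
  have ha0 : 0 < a := by omega
  have haa : a + (2 * m + 1) = p - 1 := by omega
  have hbb : b + m = p - 1 := by omega
  have hi0r : i0 < a + 1 := by omega
  have hnd : ∀ n : ℕ, 1 ≤ n → n ≤ p - 1 → ¬ p ∣ n := by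
    intro n h1 h2 hd
    have := Nat.le_of_dvd (by omega) hd
    omega
  -- Step A
  have stepA : Rel
      (∑ k ∈ Icc 1 (p - 1), ∑ j ∈ Ico 1 k,
        1 / ((j : ℚ_[p]) ^ (2 * m + 1) * (k : ℚ_[p]) ^ m))
      (∑ k ∈ Icc 1 (p - 1), ∑ j ∈ Ico 1 k, (j : ℚ_[p]) ^ a * (k : ℚ_[p]) ^ b) := by
    apply Rel.sum; intro k hk
    apply Rel.sum; intro j hj
    rw [mem_Icc] at hk; rw [mem_Ico] at hj
    have hjp : ¬ p ∣ j := hnd j hj.1 (by omega)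
    have hkp : ¬ p ∣ k := hnd k hk.1 hk.2
    apply rel_one_div
    · rw [norm_mul, norm_pow, norm_pow, norm_nat_eq_one hjp, norm_nat_eq_one hkp]
      norm_num
    · have e : (j : ℚ_[p]) ^ a * (k : ℚ_[p]) ^ b
          * ((j : ℚ_[p]) ^ (2 * m + 1) * (k : ℚ_[p]) ^ m)
          = ((j : ℚ_[p]) * (k : ℚ_[p])) ^ (p - 1) := by
        calc (j : ℚ_[p]) ^ a * (k : ℚ_[p]) ^ b
              * ((j : ℚ_[p]) ^ (2 * m + 1) * (k : ℚ_[p]) ^ m)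
            = (j : ℚ_[p]) ^ (a + (2 * m + 1)) * (k : ℚ_[p]) ^ (b + m) := by ring
          _ = (j : ℚ_[p]) ^ (p - 1) * (k : ℚ_[p]) ^ (p - 1) := by rw [haa, hbb]
          _ = ((j : ℚ_[p]) * (k : ℚ_[p])) ^ (p - 1) := (mul_pow _ _ _).symm
      rw [e]
      have hz : ((((j * k) ^ (p - 1) : ℕ) : ℤ) : ZMod p) = ((1 : ℤ) : ZMod p) := by
        push_cast
        apply ZMod.pow_card_sub_one_eq_one
        have hne : ((j * k : ℕ) : ZMod p) ≠ 0 := by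
          rw [Ne, ZMod.natCast_eq_zero_iff]
          exact fun hd => ((Nat.Prime.dvd_mul hP).mp hd).elim hjp hkp
        push_cast at hne
        exact hne
      have hr := rel_int (p := p) hz
      push_cast at hr
      exact hr
  -- Faulhaber
  have faul : ∀ k : ℕ, (∑ j ∈ Ico 1 k, (j : ℚ_[p]) ^ a)
      = ∑ i ∈ range (a + 1), ((bernoulli i : ℚ) : ℚ_[p]) * (((a + 1).choose i : ℕ) : ℚ_[p])
          * (k : ℚ_[p]) ^ (a + 1 - i) / ((a : ℚ_[p]) + 1) := by
    intro k
    have h0 : (∑ j ∈ Ico 1 k, (j : ℚ_[p]) ^ a) = ∑ j ∈ range k, (j : ℚ_[p]) ^ a := by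
      rw [range_eq_Ico]
      rcases Nat.eq_zero_or_pos k with hk0 | hk0
      · subst hk0; simp
      · rw [Finset.sum_eq_sum_Ico_succ_bot hk0]
        simp [zero_pow ha0.ne']
    rw [h0]
    have h1 := congrArg (fun q : ℚ => (q : ℚ_[p])) (sum_range_pow k a)
    push_cast at h1
    exact h1
  -- Step B
  have stepB : (∑ k ∈ Icc 1 (p - 1), ∑ j ∈ Ico 1 k, (j : ℚ_[p]) ^ a * (k : ℚ_[p]) ^ b)
      = ∑ i ∈ range (a + 1),
          ((bernoulli i : ℚ) : ℚ_[p]) * (((a + 1).choose i : ℕ) : ℚ_[p]) / ((a : ℚ_[p]) + 1)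
            * ∑ k ∈ Icc 1 (p - 1), (k : ℚ_[p]) ^ (a + 1 - i + b) := by
    have h2 : ∀ k ∈ Icc 1 (p - 1), (∑ j ∈ Ico 1 k, (j : ℚ_[p]) ^ a * (k : ℚ_[p]) ^ b)
        = ∑ i ∈ range (a + 1),
            ((bernoulli i : ℚ) : ℚ_[p]) * (((a + 1).choose i : ℕ) : ℚ_[p]) / ((a : ℚ_[p]) + 1)
              * (k : ℚ_[p]) ^ (a + 1 - i + b) := by
      intro k _
      rw [← Finset.sum_mul, faul k, Finset.sum_mul]
      refine Finset.sum_congr rfl fun i _ => ?_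
      rw [pow_add]
      ring
    rw [Finset.sum_congr rfl h2, Finset.sum_comm]
    exact Finset.sum_congr rfl fun i _ => (Finset.mul_sum _ _ _).symm
  -- divisibility characterization
  have hchar : ∀ i, i < a + 1 → ((p - 1) ∣ (a + 1 - i + b) ↔ i = i0) := by
    intro i hi
    constructor
    · rintro ⟨c, hc⟩
      match c with
      | 0 => omega
      | 1 => omega
      | (c + 2) =>
        have h2 : (p - 1) * 2 ≤ (p - 1) * (c + 2) := Nat.mul_le_mul_left _ (by omega)
        have h3 : (p - 1) * 2 ≤ a + 1 - i + b := by rw [hc]; exact h2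
        omega
    · rintro rfl
      refine ⟨1, ?_⟩
      rw [mul_one]
      omega
  -- power sum congruences
  have hU : ∀ i, i < a + 1 → Rel (∑ k ∈ Icc 1 (p - 1), (k : ℚ_[p]) ^ (a + 1 - i + b))
      (if i = i0 then (-1 : ℚ_[p]) else 0) := by
    intro i hi
    have hn : 0 < a + 1 - i + b := by omega
    have hcast : (∑ k ∈ Icc 1 (p - 1), (k : ℚ_[p]) ^ (a + 1 - i + b))
        = (((∑ k ∈ Icc 1 (p - 1), k ^ (a + 1 - i + b) : ℕ) : ℤ) : ℚ_[p]) := by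
      push_cast; rfl
    have hz : (((∑ k ∈ Icc 1 (p - 1), k ^ (a + 1 - i + b) : ℕ) : ℤ) : ZMod p)
        = (((if i = i0 then (-1 : ℤ) else 0) : ℤ) : ZMod p) := by
      push_cast
      rw [zmod_pow_sum hn]
      by_cases h : i = i0
      · rw [if_pos h, if_pos ((hchar i hi).mpr h)]
      · rw [if_neg h, if_neg (fun hd => h ((hchar i hi).mp hd))]
    have hr := rel_int (p := p) (b := (if i = i0 then (-1 : ℤ) else 0)) hz
    have h2 : (((if i = i0 then (-1 : ℤ) else 0) : ℤ) : ℚ_[p])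
        = (if i = i0 then (-1 : ℚ_[p]) else 0) := by
      split_ifs <;> simp
    rw [hcast, ← h2]
    exact hr
  -- coefficient norms
  have hnormcoef : ∀ i, i < a + 1 →
      ‖((bernoulli i : ℚ) : ℚ_[p]) * (((a + 1).choose i : ℕ) : ℚ_[p]) / ((a : ℚ_[p]) + 1)‖ ≤ 1 := by
    intro i hi
    have hda : ((a : ℚ_[p]) + 1) = ((a + 1 : ℕ) : ℚ_[p]) := by push_cast; ring
    have hd1 : ‖((a + 1 : ℕ) : ℚ_[p])‖ = 1 := by
      apply norm_nat_eq_one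
      intro hd
      have := Nat.le_of_dvd (by omega) hd
      omega
    rw [norm_div, hda, hd1, div_one, norm_mul]
    calc ‖((bernoulli i : ℚ) : ℚ_[p])‖ * ‖(((a + 1).choose i : ℕ) : ℚ_[p])‖
        ≤ 1 * 1 := mul_le_mul (norm_bernoulli_le i (by omega)) (norm_nat_le _)
            (norm_nonneg _) zero_le_one
      _ = 1 := one_mul 1
  -- Step C : collapse the sum
  have sumC : Rel
      (∑ i ∈ range (a + 1),
        ((bernoulli i : ℚ) : ℚ_[p]) * (((a + 1).choose i : ℕ) : ℚ_[p]) / ((a : ℚ_[p]) + 1)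
          * ∑ k ∈ Icc 1 (p - 1), (k : ℚ_[p]) ^ (a + 1 - i + b))
      (-(((bernoulli i0 : ℚ) : ℚ_[p]) * (((a + 1).choose i0 : ℕ) : ℚ_[p])
          / ((a : ℚ_[p]) + 1))) := by
    have h := Rel.sum (s := range (a + 1))
      (f := fun i => ((bernoulli i : ℚ) : ℚ_[p]) * (((a + 1).choose i : ℕ) : ℚ_[p])
          / ((a : ℚ_[p]) + 1) * ∑ k ∈ Icc 1 (p - 1), (k : ℚ_[p]) ^ (a + 1 - i + b))
      (g := fun i => if i = i0 then
          -(((bernoulli i0 : ℚ) : ℚ_[p]) * (((a + 1).choose i0 : ℕ) : ℚ_[p])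
            / ((a : ℚ_[p]) + 1)) else 0) ?_
    · rw [Finset.sum_ite_eq' (range (a + 1)) i0, if_pos (mem_range.mpr hi0r)] at h
      exact h
    · intro i hi
      have hi' := mem_range.mp hi
      have hif : ‖if i = i0 then (-1 : ℚ_[p]) else 0‖ ≤ 1 := by
        split_ifs <;> simp
      have h1 := Rel.mul (hnormcoef i hi') hif
        (Rel.refl (((bernoulli i : ℚ) : ℚ_[p]) * (((a + 1).choose i : ℕ) : ℚ_[p])
          / ((a : ℚ_[p]) + 1))) (hU i hi')
      have h2 : ((bernoulli i : ℚ) : ℚ_[p]) * (((a + 1).choose i : ℕ) : ℚ_[p])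
            / ((a : ℚ_[p]) + 1) * (if i = i0 then (-1 : ℚ_[p]) else 0)
          = (if i = i0 then
              -(((bernoulli i0 : ℚ) : ℚ_[p]) * (((a + 1).choose i0 : ℕ) : ℚ_[p])
                / ((a : ℚ_[p]) + 1)) else 0) := by
        by_cases h : i = i0
        · subst h; rw [if_pos rfl, if_pos rfl]; ring
        · rw [if_neg h, if_neg h, mul_zero]
      rw [h2] at h1
      exact h1
  -- Step D : the constant
  have hu : ¬ p ∣ (a + 1) := by
    intro hd; have := Nat.le_of_dvd (by omega) hd; omega
  have hv : ¬ p ∣ (2 * m + 1) := by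
    intro hd; have := Nat.le_of_dvd (by omega) hd; omega
  have stepD : Rel
      (-(((bernoulli i0 : ℚ) : ℚ_[p]) * (((a + 1).choose i0 : ℕ) : ℚ_[p])
          / ((a : ℚ_[p]) + 1)))
      ((-1 : ℚ_[p]) ^ m / (2 * (m : ℚ_[p]) + 1) * (((3 * m).choose m : ℕ) : ℚ_[p])
        * ((bernoulli i0 : ℚ) : ℚ_[p])) := by
    have hz : (((-((a + 1).choose i0 : ℤ)) : ℤ) : ZMod p) * ((2 * m + 1 : ℕ) : ZMod p)
        = ((((-1) ^ m * ((3 * m).choose m : ℕ) : ℤ)) : ZMod p) * ((a + 1 : ℕ) : ZMod p) := by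
      have hs : ((a + 1 : ℕ) : ZMod p) = -((2 * m + 1 : ℕ) : ZMod p) := by
        have h0 : (((a + 1) + (2 * m + 1) : ℕ) : ZMod p) = 0 := by
          rw [show (a + 1) + (2 * m + 1) = p by omega]
          exact ZMod.natCast_self p
        push_cast at h0 ⊢
        linear_combination h0
      have hc : (((a + 1).choose i0 : ℕ) : ZMod p)
          = (-1) ^ m * (((3 * m).choose m : ℕ) : ZMod p) := by
        rw [show i0 = (a + 1) - m by omega, Nat.choose_symm (by omega : m ≤ a + 1),
          show a + 1 = p - (2 * m + 1) by omega]
        exact zmod_choose hm (by omega)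
      push_cast at hs hc ⊢
      rw [hc, hs]
      ring
    have hrel := rel_div (p := p) (A := -((a + 1).choose i0 : ℤ))
      (B := ((-1) ^ m * ((3 * m).choose m : ℕ) : ℤ)) (u := a + 1) (v := 2 * m + 1) hu hv hz
    have e1 : -(((bernoulli i0 : ℚ) : ℚ_[p]) * (((a + 1).choose i0 : ℕ) : ℚ_[p])
          / ((a : ℚ_[p]) + 1))
        = ((((-((a + 1).choose i0 : ℤ)) : ℤ) : ℚ_[p]) / ((a + 1 : ℕ) : ℚ_[p]))
            * ((bernoulli i0 : ℚ) : ℚ_[p]) := by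
      push_cast
      ring
    have e2 : (-1 : ℚ_[p]) ^ m / (2 * (m : ℚ_[p]) + 1) * (((3 * m).choose m : ℕ) : ℚ_[p])
          * ((bernoulli i0 : ℚ) : ℚ_[p])
        = (((((-1) ^ m * ((3 * m).choose m : ℕ) : ℤ)) : ℚ_[p]) / ((2 * m + 1 : ℕ) : ℚ_[p]))
            * ((bernoulli i0 : ℚ) : ℚ_[p]) := by
      push_cast
      ring
    rw [e1, e2]
    refine Rel.mul ?_ (norm_bernoulli_le i0 (by omega)) hrel (Rel.refl _)
    rw [norm_div]
    have hd1 : ‖((a + 1 : ℕ) : ℚ_[p])‖ = 1 := norm_nat_eq_one hu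
    rw [hd1, div_one]
    exact Padic.norm_int_le_one _
  refine stepA.trans ?_
  rw [stepB]
  exact sumC.trans stepD

end Stmt18

/-- For a prime `p > 3` and a positive even integer `m` with
`p > 3m + 1`, we have
`∑_{1 ≤ j < k ≤ p-1} 1/(j^{2m+1}·k^m)
  ≡ ((-1)^m/(2m+1))·C(3m, m)·B_{p-1-3m} (mod p)`. -/
theorem stmt_18 (p : ℕ) (hp : p.Prime) (hp3 : 3 < p) (m : ℕ) (hm : 0 < m)
    (hme : Even m) (hpm : 3 * m + 1 < p) :
    (p : ℤ) ∣
      ((∑ k ∈ Finset.Icc 1 (p - 1), ∑ j ∈ Finset.Ico 1 k,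
          1 / ((j : ℚ) ^ (2 * m + 1) * (k : ℚ) ^ m))
        - ((-1 : ℚ) ^ m / (2 * m + 1)) * ((3 * m).choose m : ℚ)
            * bernoulli (p - 1 - 3 * m)).num := by
  haveI hpf : Fact p.Prime := ⟨hp⟩
  set q : ℚ := ((∑ k ∈ Finset.Icc 1 (p - 1), ∑ j ∈ Finset.Ico 1 k,
          1 / ((j : ℚ) ^ (2 * m + 1) * (k : ℚ) ^ m))
        - ((-1 : ℚ) ^ m / (2 * m + 1)) * ((3 * m).choose m : ℚ)
            * bernoulli (p - 1 - 3 * m)) with hqdef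
  have hrel := Stmt18.main_rel (p := p) m hm hpm
  have hcast : ((q : ℚ) : ℚ_[p])
      = (∑ k ∈ Finset.Icc 1 (p - 1), ∑ j ∈ Finset.Ico 1 k,
          1 / ((j : ℚ_[p]) ^ (2 * m + 1) * (k : ℚ_[p]) ^ m))
        - ((-1 : ℚ_[p]) ^ m / (2 * (m : ℚ_[p]) + 1) * (((3 * m).choose m : ℕ) : ℚ_[p])
            * ((bernoulli (p - 1 - 3 * m) : ℚ) : ℚ_[p])) := by
    rw [hqdef]
    push_cast
    ring
  have hnorm : ‖((q : ℚ) : ℚ_[p])‖ < 1 := by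
    rw [hcast]
    exact hrel
  have hden0 : ((q.den : ℚ)) ≠ 0 := Nat.cast_ne_zero.mpr q.den_nz
  have h0 : (q.num : ℚ) = q * (q.den : ℚ) := by
    exact (div_eq_iff hden0).mp (Rat.num_div_den q)
  have hnum : ((q.num : ℤ) : ℚ_[p]) = ((q : ℚ) : ℚ_[p]) * ((q.den : ℕ) : ℚ_[p]) := by
    have := congrArg (fun x : ℚ => (x : ℚ_[p])) h0
    push_cast at this
    exact this
  rw [← Padic.norm_intCast_lt_one_iff]
  calc ‖((q.num : ℤ) : ℚ_[p])‖ = ‖((q : ℚ) : ℚ_[p])‖ * ‖((q.den : ℕ) : ℚ_[p])‖ := by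
        rw [hnum, norm_mul]
    _ ≤ ‖((q : ℚ) : ℚ_[p])‖ * 1 := by
        exact mul_le_mul_of_nonneg_left (Stmt18.norm_nat_le _) (norm_nonneg _)
    _ < 1 := by rwa [mul_one]
end
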